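/- arXiv:1212.2096 — 6 statements merged into one kernel-verified Lean document; each statement's English description precedes it below -/
import Mathlib

section
/- Let ψ₁ and ψ₂ be functions defined on [1,∞) that are positive, continuous, and strictly decreasing to zero (lim_{t→∞}ψᵢ(t)=0), and suppose that φ(t)=ψ₂(t)/ψ₁(t) is monotone nondecreasing. Then η(ψ₁;t) ≤ η(ψ₂;t) for all t ≥ 1. -/
open Real Filter

noncomputable section

/-- If `ψ₁, ψ₂ : [1,∞) → (0,∞)` are positive, continuous, strictly decreasing to zero,
`φ = ψ₂/ψ₁` is nondecreasing, and `η i` satisfies `ηᵢ t ≥ t` with `ψᵢ(ηᵢ t) = ψᵢ(t)/2`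
(i.e. `ηᵢ t = ψᵢ⁻¹(ψᵢ t / 2)`), then `η₁ t ≤ η₂ t` for all `t ≥ 1`. -/
theorem statement5 (ψ₁ ψ₂ η₁ η₂ : ℝ → ℝ)
    (hpos₁ : ∀ t ≥ (1:ℝ), 0 < ψ₁ t) (hpos₂ : ∀ t ≥ (1:ℝ), 0 < ψ₂ t)
    (hc₁ : ContinuousOn ψ₁ (Set.Ici 1)) (hc₂ : ContinuousOn ψ₂ (Set.Ici 1))
    (hd₁ : StrictAntiOn ψ₁ (Set.Ici 1)) (hd₂ : StrictAntiOn ψ₂ (Set.Ici 1))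
    (hlim₁ : Tendsto ψ₁ atTop (nhds 0)) (hlim₂ : Tendsto ψ₂ atTop (nhds 0))
    (hratio : MonotoneOn (fun t => ψ₂ t / ψ₁ t) (Set.Ici 1))
    (hη₁ : ∀ t ≥ (1:ℝ), t ≤ η₁ t ∧ ψ₁ (η₁ t) = ψ₁ t / 2)
    (hη₂ : ∀ t ≥ (1:ℝ), t ≤ η₂ t ∧ ψ₂ (η₂ t) = ψ₂ t / 2) :
    ∀ t ≥ (1:ℝ), η₁ t ≤ η₂ t := by
  intro t ht
  obtain ⟨h1t, he1⟩ := hη₁ t ht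
  obtain ⟨h2t, he2⟩ := hη₂ t ht
  have ht1 : (1:ℝ) ≤ η₁ t := le_trans ht h1t
  have ht2 : (1:ℝ) ≤ η₂ t := le_trans ht h2t
  by_contra h
  push_neg at h
  have hφ := hratio (Set.mem_Ici.2 ht) (Set.mem_Ici.2 ht2) h2t
  simp only at hφ
  have p1 := hpos₁ t ht
  have p2 := hpos₂ t ht
  have p1' := hpos₁ _ ht2
  have key : ψ₁ (η₂ t) ≤ ψ₁ t / 2 := by
    rw [he2] at hφ
    rw [div_le_div_iff₀ p1 p1'] at hφ
    nlinarith
  have hlt : ψ₁ (η₁ t) < ψ₁ (η₂ t) :=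
    hd₁ (Set.mem_Ici.2 ht2) (Set.mem_Ici.2 ht1) h
  linarith [he1 ▸ hlt]
end
end

section
/- There exists an absolute constant K>0 such that for every ψ∈𝔐_∞^+, every β∈ℝ, every modulus of continuity ω, and every n∈ℕ with μ(ψ;n)>2, one has I_n(ψ,β,ω)_C ≤ (2/π)·ψ(n)·e_n(ω) + K·ψ(n+1)·(1/n + 1/(μ(ψ;n)−2))·ω(1/n). -/
open Real MeasureTheory Filter

noncomputable section

/-- `ω` is a modulus of continuity: continuous, nondecreasing, subadditive on `[0,∞)`,
nonnegative, and `ω 0 = 0`. -/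
def IsModulus (ω : ℝ → ℝ) : Prop :=
  ContinuousOn ω (Set.Ici 0) ∧ MonotoneOn ω (Set.Ici 0) ∧
  (∀ s t : ℝ, 0 ≤ s → 0 ≤ t → ω (s + t) ≤ ω s + ω t) ∧ ω 0 = 0 ∧
  ∀ t : ℝ, 0 ≤ t → 0 ≤ ω t

/-- `ψ` belongs to `𝔐_∞^+`, where `η t = ψ⁻¹(ψ t / 2)` (i.e. `η t ≥ t` and
`ψ (η t) = ψ t / 2`) and `μ t = t / (η t − t)` is nondecreasing and tends to `∞`. -/
def IsMInfPlus (ψ η : ℝ → ℝ) : Prop :=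
  (∀ t ≥ (1:ℝ), 0 < ψ t) ∧ ContinuousOn ψ (Set.Ici 1) ∧
  ConvexOn ℝ (Set.Ici 1) ψ ∧ Tendsto ψ atTop (nhds 0) ∧
  (∀ t ≥ (1:ℝ), t < η t ∧ ψ (η t) = ψ t / 2) ∧
  MonotoneOn (fun t => t / (η t - t)) (Set.Ici 1) ∧
  Tendsto (fun t => t / (η t - t)) atTop atTop


/-- The kernel `Ψ_n(t) = ψ(n)/2 + ∑_{k=1}^∞ ψ(n+k) cos kt`. -/
def PsiN (ψ : ℝ → ℝ) (n : ℕ) (t : ℝ) : ℝ :=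
  ψ n / 2 + ∑' k : ℕ, ψ ((n : ℝ) + k + 1) * Real.cos ((k + 1) * t)

/-- The points `x_k = (1+β)π/(2n) + kπ/n`. -/
def xPt (β : ℝ) (n : ℕ) (k : ℤ) : ℝ := (1 + β) * π / (2 * n) + k * π / n

/-- The index `k` with `t ∈ [t_k, t_{k+1})`, `t_k = βπ/(2n) + kπ/n`. -/
def stepIdx (β : ℝ) (n : ℕ) (t : ℝ) : ℤ := ⌊(t - β * π / (2 * n)) * n / π⌋

/-- The step function `Ψ̄_n`, equal to `Ψ_n(x_k)` on `[t_k, t_{k+1})`. -/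
def PsiBar (ψ : ℝ → ℝ) (β : ℝ) (n : ℕ) (t : ℝ) : ℝ :=
  PsiN ψ n (xPt β n (stepIdx β n t))

/-- `H_{ω_C}`: continuous `2π`-periodic functions whose modulus of continuity is
dominated by `ω`. -/
def HClassC (ω : ℝ → ℝ) : Set (ℝ → ℝ) :=
  {φ | Continuous φ ∧ Function.Periodic φ (2 * π) ∧
    ∀ t : ℝ, 0 ≤ t → ∀ x h : ℝ, |h| ≤ t → |φ (x + h) - φ x| ≤ ω t}

/-- `I_n(ψ,β,ω)_C = sup_{φ ∈ H_{ω_C}} (2/π)‖∫_0^{2π} φ(·−t)cos(nt−βπ/2)Ψ̄_n(t)dt‖_C`. -/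
def In (ψ : ℝ → ℝ) (β : ℝ) (ω : ℝ → ℝ) (n : ℕ) : ℝ :=
  sSup {e | ∃ φ ∈ HClassC ω, e = (2 / π) *
    ⨆ x : ℝ, |∫ t in (0:ℝ)..(2 * π),
      φ (x - t) * Real.cos (n * t - β * π / 2) * PsiBar ψ β n t|}

/-- `e_n(ω) = ∫_0^{π/2} ω(2t/n) sin t dt`. -/
def eN (n : ℕ) (ω : ℝ → ℝ) : ℝ := ∫ t in (0:ℝ)..(π / 2), ω (2 * t / n) * Real.sin t


lemma psi_anti {ψ : ℝ → ℝ} (h1 : ∀ t ≥ (1:ℝ), 0 < ψ t)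
    (hc : ConvexOn ℝ (Set.Ici 1) ψ) (h0 : Tendsto ψ atTop (nhds 0)) :
    AntitoneOn ψ (Set.Ici 1) := by
  intro s hs t ht hst
  by_contra hlt
  push_neg at hlt
  have hst' : s < t := lt_of_le_of_ne hst (by rintro rfl; exact lt_irrefl _ hlt)
  obtain ⟨u, hu1, hu2⟩ :=
    ((h0.eventually_lt_const (h1 t ht)).and (eventually_ge_atTop (t + 1))).exists
  have hts : (0:ℝ) < t - s := by linarith
  have hut : (0:ℝ) < u - t := by linarith
  have hus : (0:ℝ) < u - s := by linarith
  have hu : u ∈ Set.Ici (1:ℝ) := by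
    simp only [Set.mem_Ici] at *; linarith
  have key := hc.2 hs hu (show (0:ℝ) ≤ (u - t)/(u - s) by positivity)
    (show (0:ℝ) ≤ (t - s)/(u - s) by positivity)
    (show (u - t)/(u - s) + (t - s)/(u - s) = 1 by field_simp; ring)
  rw [smul_eq_mul, smul_eq_mul, smul_eq_mul, smul_eq_mul] at key
  have harg : (u - t)/(u - s) * s + (t - s)/(u - s) * u = t := by
    field_simp; ring
  rw [harg] at key
  have h3 : (u - t)/(u - s) * ψ s + (t - s)/(u - s) * ψ u < ψ t := by
    have e1 : (u - t)/(u - s) * ψ s < (u - t)/(u - s) * ψ t :=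
      mul_lt_mul_of_pos_left hlt (by positivity)
    have e2 : (t - s)/(u - s) * ψ u < (t - s)/(u - s) * ψ t :=
      mul_lt_mul_of_pos_left hu1 (by positivity)
    have e3 : (u - t)/(u - s) * ψ t + (t - s)/(u - s) * ψ t = ψ t := by
      field_simp; ring
    linarith
  linarith

lemma psi_pow {ψ : ℝ → ℝ} (hanti : AntitoneOn ψ (Set.Ici 1)) {b ρ : ℝ}
    (hb : 1 ≤ b) (hρ : 1 < ρ) (hhalf : ∀ t, b ≤ t → ψ (ρ * t) ≤ ψ t / 2) :
    ∀ (j : ℕ) (t : ℝ), b * ρ ^ j ≤ t → ψ t ≤ ψ b / 2 ^ j := by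
  intro j
  induction j with
  | zero => intro t ht; simp only [pow_zero, mul_one] at ht
            simpa using hanti (Set.mem_Ici.2 hb) (Set.mem_Ici.2 (hb.trans ht)) ht
  | succ j ih =>
      intro t ht
      have hρ0 : (0:ℝ) < ρ := by linarith
      have hbj : (1:ℝ) ≤ b * ρ ^ j := by
        have : (1:ℝ) ≤ ρ ^ j := one_le_pow₀ hρ.le
        nlinarith
      have hu : b * ρ ^ j ≤ t / ρ := by
        rw [le_div_iff₀ hρ0]
        calc b * ρ ^ j * ρ = b * ρ ^ (j+1) := by ring
        _ ≤ t := ht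
      have hbu : b ≤ t / ρ := le_trans (by nlinarith [(one_le_pow₀ hρ.le : (1:ℝ) ≤ ρ ^ j)]) hu
      have h1 := hhalf (t / ρ) hbu
      rw [mul_div_cancel₀ _ (ne_of_gt hρ0)] at h1
      calc ψ t ≤ ψ (t / ρ) / 2 := h1
      _ ≤ ψ b / 2 ^ j / 2 := by linarith [ih (t/ρ) hu]
      _ = ψ b / 2 ^ (j+1) := by ring

lemma psi_decay {ψ : ℝ → ℝ} (hanti : AntitoneOn ψ (Set.Ici 1)) {b ρ : ℝ}
    (hb : 1 ≤ b) (hρ : 1 < ρ) (hhalf : ∀ t, b ≤ t → ψ (ρ * t) ≤ ψ t / 2)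
    (hψb : 0 ≤ ψ b) :
    ∀ t, b ≤ t → ψ t ≤ 2 * ψ b * b ^ (Real.log 2 / Real.log ρ) *
      t ^ (-(Real.log 2 / Real.log ρ)) := by
  intro t ht
  set α := Real.log 2 / Real.log ρ with hα
  have hb0 : (0:ℝ) < b := by linarith
  have ht0 : (0:ℝ) < t := by linarith
  have hlρ : 0 < Real.log ρ := Real.log_pos hρ
  have hl2 : 0 < Real.log 2 := Real.log_pos (by norm_num)
  set x := t / b with hx
  have hx1 : 1 ≤ x := (one_le_div hb0).2 ht
  have hx0 : 0 < x := by linarith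
  have hlx : 0 ≤ Real.log x := Real.log_nonneg hx1
  set j := ⌊Real.log x / Real.log ρ⌋₊ with hj
  have hj1 : (j:ℝ) ≤ Real.log x / Real.log ρ := Nat.floor_le (by positivity)
  have hj2 : Real.log x / Real.log ρ < j + 1 := Nat.lt_floor_add_one _
  -- b * ρ^j ≤ t
  have hrj : (ρ:ℝ) ^ j ≤ x := by
    have h1 : (ρ:ℝ) ^ j = Real.exp (Real.log ρ * j) := by
      rw [← Real.rpow_natCast ρ j, Real.rpow_def_of_pos (by linarith)]
    rw [h1, ← Real.exp_log hx0]
    apply Real.exp_le_exp.2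
    calc Real.log ρ * (j:ℝ) ≤ Real.log ρ * (Real.log x / Real.log ρ) := by
          apply mul_le_mul_of_nonneg_left hj1 hlρ.le
    _ = Real.log x := by field_simp
  have hstep : ψ t ≤ ψ b / 2 ^ j := by
    apply psi_pow hanti hb hρ hhalf j
    calc b * ρ ^ j ≤ b * x := by nlinarith
    _ = t := by rw [hx]; field_simp
  -- 2^{-j} ≤ 2 * x^{-α}
  have hxα : x ^ (-α) = Real.exp (-(α * Real.log x)) := by
    rw [Real.rpow_def_of_pos hx0]; ring_nf
  have h2j : ((2:ℝ) ^ j)⁻¹ ≤ 2 * x ^ (-α) := by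
    have e1 : ((2:ℝ) ^ j : ℝ) = Real.exp (Real.log 2 * j) := by
      rw [← Real.rpow_natCast (2:ℝ) j, Real.rpow_def_of_pos (by norm_num)]
    have e2 : α * Real.log x ≤ ((j:ℝ) + 1) * Real.log 2 := by
      rw [hα]
      calc Real.log 2 / Real.log ρ * Real.log x
          = (Real.log x / Real.log ρ) * Real.log 2 := by ring
      _ ≤ ((j:ℝ) + 1) * Real.log 2 := mul_le_mul_of_nonneg_right hj2.le hl2.le
    rw [e1, hxα, ← Real.exp_neg]
    calc Real.exp (-(Real.log 2 * j))
        = 2 * Real.exp (-(((j:ℝ) + 1) * Real.log 2)) := by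
          have h2e : 2 * Real.exp (-(((j:ℝ) + 1) * Real.log 2))
              = Real.exp (Real.log 2 + -(((j:ℝ) + 1) * Real.log 2)) := by
            rw [Real.exp_add, Real.exp_log (by norm_num : (0:ℝ) < 2)]
          rw [h2e]
          congr 1
          ring
    _ ≤ 2 * Real.exp (-(α * Real.log x)) := by
          have := Real.exp_le_exp.2 (neg_le_neg e2)
          linarith
  have hxbt : x ^ (-α) = b ^ α * t ^ (-α) := by
    rw [hx, Real.div_rpow ht0.le hb0.le, Real.rpow_neg hb0.le, div_eq_mul_inv, inv_inv]
    ring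
  calc ψ t ≤ ψ b / 2 ^ j := hstep
  _ = ψ b * ((2:ℝ) ^ j)⁻¹ := by ring
  _ ≤ ψ b * (2 * x ^ (-α)) := by
      apply mul_le_mul_of_nonneg_left h2j hψb
  _ = 2 * ψ b * b ^ α * t ^ (-α) := by rw [hxbt]; ring


lemma psi_tail_partial {ψ : ℝ → ℝ} (hanti : AntitoneOn ψ (Set.Ici 1)) {b ρ : ℝ}
    (hb : 1 ≤ b) (hρ : 1 < ρ) (hhalf : ∀ t, b ≤ t → ψ (ρ * t) ≤ ψ t / 2)
    (hψb : 0 ≤ ψ b) (hψpos : ∀ t ≥ (1:ℝ), 0 ≤ ψ t)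
    (hα : 1 < Real.log 2 / Real.log ρ) :
    ∀ K : ℕ, ∑ k ∈ Finset.range K, ψ (b + k) ≤
      ψ b * (1 + 2 * b / (Real.log 2 / Real.log ρ - 1)) := by
  set α := Real.log 2 / Real.log ρ with hαdef
  have hb0 : (0:ℝ) < b := by linarith
  have hα1 : (0:ℝ) < α - 1 := by linarith
  have hRHSpos : 0 ≤ ψ b * (2 * b / (α - 1)) := by positivity
  intro K
  match K with
  | 0 => simp; nlinarith
  | (K+1) =>
    rw [Finset.sum_range_succ']
    simp only [Nat.cast_zero, add_zero]
    set C := 2 * ψ b * b ^ α with hC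
    have hCpos : 0 ≤ C := by positivity
    set g : ℝ → ℝ := fun t => C * t ^ (-α) with hg
    have hdecay : ∀ t, b ≤ t → ψ t ≤ g t := fun t ht =>
      psi_decay hanti hb hρ hhalf hψb t ht
    have hganti : AntitoneOn g (Set.Icc b (b + (K:ℝ))) := by
      intro s hs t ht hst
      have hs0 : (0:ℝ) < s := lt_of_lt_of_le hb0 hs.1
      have h1 : s ^ α ≤ t ^ α := Real.rpow_le_rpow hs0.le hst (by linarith)
      have hsp : (0:ℝ) < s ^ α := Real.rpow_pos_of_pos hs0 _
      simp only [hg]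
      rw [Real.rpow_neg hs0.le, Real.rpow_neg (by linarith : (0:ℝ) ≤ t)]
      have := inv_anti₀ hsp h1
      nlinarith
    have hsum1 : ∑ i ∈ Finset.range K, ψ (b + ((i:ℕ)+1:ℕ)) ≤
        ∑ i ∈ Finset.range K, g (b + ((i:ℕ)+1:ℕ)) := by
      apply Finset.sum_le_sum
      intro i _
      apply hdecay
      push_cast
      linarith [Nat.cast_nonneg (α := ℝ) i]
    have hsum2 : ∑ i ∈ Finset.range K, g (b + ((i:ℕ)+1:ℕ)) ≤
        ∫ x in b..(b + (K:ℝ)), g x := AntitoneOn.sum_le_integral hganti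
    have hgint : IntegrableOn (fun t : ℝ => t ^ (-α)) (Set.Ioi b) := by
      apply integrableOn_Ioi_rpow_of_lt (by linarith) hb0
    have hgint' : IntegrableOn g (Set.Ioi b) := by
      exact hgint.const_mul C
    have hsum3 : ∫ x in b..(b + (K:ℝ)), g x ≤ ∫ x in Set.Ioi b, g x := by
      rw [intervalIntegral.integral_of_le (by linarith [Nat.cast_nonneg (α := ℝ) K])]
      apply setIntegral_mono_set hgint'
      · filter_upwards [self_mem_ae_restrict measurableSet_Ioi] with t htmem
        have : (0:ℝ) < t := lt_trans hb0 htmem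
        simp only [hg]
        positivity
      · exact (Set.Ioc_subset_Ioi_self).eventuallyLE
    have hval : ∫ x in Set.Ioi b, g x = C * (-b ^ (-α + 1) / (-α + 1)) := by
      rw [hg]
      rw [MeasureTheory.integral_const_mul]
      rw [integral_Ioi_rpow_of_lt (by linarith) hb0]
    have hbb : b ^ α * b ^ (-α + 1) = b := by
      rw [← Real.rpow_add hb0]
      norm_num
    have hval2 : C * (-b ^ (-α + 1) / (-α + 1)) = ψ b * (2 * b / (α - 1)) := by
      have e1 : -b ^ (-α + 1) / (-α + 1) = b ^ (-α + 1) / (α - 1) := by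
        have : (-α + 1) = -(α - 1) := by ring
        rw [this, div_neg, neg_div, neg_neg]
      rw [e1, hC]
      rw [div_eq_mul_inv, div_eq_mul_inv]
      calc 2 * ψ b * b ^ α * (b ^ (-α + 1) * (α - 1)⁻¹)
          = 2 * ψ b * (b ^ α * b ^ (-α + 1)) * (α - 1)⁻¹ := by ring
      _ = ψ b * (2 * b * (α - 1)⁻¹) := by rw [hbb]; ring
    have hterm : ψ (b + (0:ℕ)) = ψ b := by norm_num
    push_cast at hsum1 hsum2 ⊢
    have : ∑ i ∈ Finset.range K, ψ (b + ((i:ℝ)+1)) ≤ ψ b * (2 * b / (α - 1)) := by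
      calc ∑ i ∈ Finset.range K, ψ (b + ((i:ℝ)+1)) ≤ ∫ x in b..(b + (K:ℝ)), g x := by
            apply le_trans _ hsum2
            exact le_of_eq_of_le (by norm_num) hsum1
      _ ≤ ∫ x in Set.Ioi b, g x := hsum3
      _ = ψ b * (2 * b / (α - 1)) := by rw [hval, hval2]
    have e2 : ψ b * (1 + 2 * b / (α - 1)) = ψ b * (2 * b / (α - 1)) + ψ b := by ring
    rw [e2]
    exact add_le_add this le_rfl

lemma abel_sum (c e : ℕ → ℝ) (N : ℕ) :
    ∑ k ∈ Finset.range (N+1), c k * e k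
      = ∑ k ∈ Finset.range N, (c k - c (k+1)) * (∑ j ∈ Finset.range (k+1), e j)
        + c N * (∑ j ∈ Finset.range (N+1), e j) := by
  induction N with
  | zero => simp
  | succ N ih =>
      rw [Finset.sum_range_succ (fun k => c k * e k), ih,
        Finset.sum_range_succ (fun k => (c k - c (k+1)) * (∑ j ∈ Finset.range (k+1), e j)),
        Finset.sum_range_succ e (N+1)]
      ring

lemma dirichlet_id (t : ℝ) (N : ℕ) :
    2 * Real.sin (t/2) * (1/2 + ∑ k ∈ Finset.range N, Real.cos (((k:ℝ)+1) * t))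
      = Real.sin (((N:ℝ) + 1/2) * t) := by
  induction N with
  | zero =>
      simp only [Finset.range_zero, Finset.sum_empty, Nat.cast_zero, add_zero, zero_add]
      rw [show (1/2:ℝ) * t = t/2 by ring]
      ring
  | succ N ih =>
      rw [Finset.sum_range_succ]
      have key : Real.sin ((((N:ℝ)+1) + 1/2) * t) - Real.sin (((N:ℝ) + 1/2)*t)
          = 2 * Real.sin (t/2) * Real.cos (((N:ℝ)+1)*t) := by
        rw [show (((N:ℝ)+1) + 1/2) * t = ((N:ℝ)+1/2)*t + 2*(t/2) by ring]
        rw [Real.sin_add, Real.cos_two_mul', Real.sin_two_mul]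
        rw [show ((N:ℝ)+1)*t = ((N:ℝ)+1/2)*t + t/2 by ring, Real.cos_add]
        have h := Real.sin_sq_add_cos_sq (t/2)
        linear_combination Real.sin (((N:ℝ)+1/2)*t) * h
      push_cast
      linear_combination ih - key

lemma fejer_id (t : ℝ) (N : ℕ) :
    4 * Real.sin (t/2)^2 *
      (∑ j ∈ Finset.range (N+1),
        (1/2 + ∑ k ∈ Finset.range j, Real.cos (((k:ℝ)+1) * t)))
      = 1 - Real.cos (((N:ℝ)+1) * t) := by
  induction N with
  | zero =>
      simp only [zero_add, Finset.sum_range_one, Finset.range_zero, Finset.sum_empty,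
        add_zero, Nat.cast_zero]
      rw [show (1:ℝ) * t = 2*(t/2) by ring, Real.cos_two_mul']
      linear_combination Real.sin_sq_add_cos_sq (t/2)
  | succ N ih =>
      rw [Finset.sum_range_succ]
      have hd := dirichlet_id t (N+1)
      have key : Real.cos (((N:ℝ)+1)*t) - Real.cos ((((N:ℝ)+1)+1)*t)
          = 2 * Real.sin (t/2) * Real.sin ((((N:ℝ)+1) + 1/2) * t) := by
        rw [show (((N:ℝ)+1))*t = ((((N:ℝ)+1)+1/2)*t) - t/2 by ring]
        rw [show ((((N:ℝ)+1)+1))*t = ((((N:ℝ)+1)+1/2)*t) + t/2 by ring]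
        rw [Real.cos_add, Real.cos_sub]
        ring
      push_cast at hd ⊢
      linear_combination ih + 2*Real.sin (t/2)*hd - key

lemma psiN_nonneg {ψ : ℝ → ℝ} {n : ℕ} (hn : 1 ≤ n)
    (hanti : AntitoneOn ψ (Set.Ici 1)) (hpos : ∀ t ≥ (1:ℝ), 0 < ψ t)
    (hconv : ConvexOn ℝ (Set.Ici 1) ψ) (h0 : Tendsto ψ atTop (nhds 0))
    (hsum : Summable (fun k : ℕ => ψ ((n:ℝ) + k + 1))) (t : ℝ) :
    0 ≤ PsiN ψ n t := by
  have hn1 : (1:ℝ) ≤ (n:ℝ) := by exact_mod_cast hn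
  have hargk : ∀ x : ℝ, 0 ≤ x → (1:ℝ) ≤ (n:ℝ) + x := fun x hx => by linarith
  have hpsik : ∀ k : ℕ, 0 < ψ ((n:ℝ) + k + 1) := fun k =>
    hpos _ (by linarith [hargk (k:ℝ) (Nat.cast_nonneg k)])
  have hsumc : Summable (fun k : ℕ => ψ ((n:ℝ) + k + 1) * Real.cos (((k:ℝ)+1) * t)) := by
    apply Summable.of_norm_bounded hsum
    intro k
    rw [Real.norm_eq_abs, abs_mul]
    calc |ψ ((n:ℝ) + k + 1)| * |Real.cos (((k:ℝ)+1)*t)| ≤ |ψ ((n:ℝ) + k + 1)| * 1 :=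
          mul_le_mul_of_nonneg_left (Real.abs_cos_le_one _) (abs_nonneg _)
    _ = ψ ((n:ℝ) + k + 1) := by rw [mul_one, abs_of_nonneg (hpsik k).le]
  have hPsiNdef : PsiN ψ n t = ψ n / 2 + ∑' k : ℕ, ψ ((n:ℝ) + k + 1) * Real.cos (((k:ℝ)+1) * t) := rfl
  by_cases hs : Real.sin (t/2) = 0
  · obtain ⟨m, hm⟩ := Real.sin_eq_zero_iff.1 hs
    have ht : t = 2 * m * π := by linarith [hm]
    have hcos : ∀ k : ℕ, Real.cos (((k:ℝ)+1) * t) = 1 := by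
      intro k
      have h2 : ((k:ℝ)+1) * t = (((k+1) * m : ℤ) : ℝ) * (2*π) := by
        push_cast
        rw [ht]; ring
      rw [h2, Real.cos_int_mul_two_pi]
    rw [hPsiNdef]
    have : ∑' k : ℕ, ψ ((n:ℝ) + k + 1) * Real.cos (((k:ℝ)+1) * t)
        = ∑' k : ℕ, ψ ((n:ℝ) + k + 1) := tsum_congr fun k => by rw [hcos k, mul_one]
    rw [this]
    have h1 : 0 ≤ ψ (n:ℝ) := (hpos _ hn1).le
    have h2 : 0 ≤ ∑' k : ℕ, ψ ((n:ℝ) + k + 1) := tsum_nonneg fun k => (hpsik k).le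
    positivity
  · -- main case
    set s := Real.sin (t/2) with hsdef
    have hs2 : 0 < |s| := abs_pos.2 hs
    set a : ℕ → ℝ := fun k => ψ ((n:ℝ) + k) with ha
    set e : ℕ → ℝ := fun k => if k = 0 then 1/2 else Real.cos ((k:ℝ) * t) with he
    set D : ℕ → ℝ := fun N => ∑ j ∈ Finset.range (N+1), e j with hD
    set KK : ℕ → ℝ := fun N => ∑ j ∈ Finset.range (N+1), D j with hKK
    have ha1 : ∀ k : ℕ, a (k+1) = ψ ((n:ℝ) + k + 1) := by
      intro k; simp only [ha]; congr 1; push_cast; ring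
    have hD_eq : ∀ N : ℕ, D N = 1/2 + ∑ k ∈ Finset.range N, Real.cos (((k:ℝ)+1) * t) := by
      intro N
      simp only [hD]
      rw [Finset.sum_range_succ']
      simp only [he, if_pos rfl]
      rw [add_comm]
      congr 1
      apply Finset.sum_congr rfl
      intro i _
      rw [if_neg (Nat.succ_ne_zero i)]
      push_cast; ring_nf
    have hDd : ∀ N : ℕ, 2 * s * D N = Real.sin (((N:ℝ) + 1/2) * t) := by
      intro N; rw [hD_eq N]; exact dirichlet_id t N
    have hDabs : ∀ N : ℕ, |D N| ≤ 1 / (2 * |s|) := by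
      intro N
      rw [le_div_iff₀ (by positivity)]
      calc |D N| * (2 * |s|) = |2 * s * D N| := by rw [abs_mul, abs_mul]; simp [abs_of_nonneg]; ring
      _ = |Real.sin (((N:ℝ) + 1/2) * t)| := by rw [hDd N]
      _ ≤ 1 := Real.abs_sin_le_one _
    have hKnn : ∀ N : ℕ, 0 ≤ KK N := by
      intro N
      have hf := fejer_id t N
      have hKe : KK N = ∑ j ∈ Finset.range (N+1),
          (1/2 + ∑ k ∈ Finset.range j, Real.cos (((k:ℝ)+1) * t)) := by
        simp only [hKK]
        exact Finset.sum_congr rfl fun j _ => hD_eq j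
      have hs4 : 0 < 4 * s^2 := by positivity
      have hcos1 : Real.cos (((N:ℝ)+1) * t) ≤ 1 := Real.cos_le_one _
      nlinarith [hf, hKe.symm ▸ hf]
    have hΔ : ∀ k : ℕ, a (k+1) ≤ a k := by
      intro k
      simp only [ha]
      apply hanti (Set.mem_Ici.2 (hargk _ (Nat.cast_nonneg k)))
        (Set.mem_Ici.2 (hargk _ (Nat.cast_nonneg (k+1))))
      push_cast; linarith
    have hΔ2 : ∀ k : ℕ, a k - 2 * a (k+1) + a (k+2) ≥ 0 := by
      intro k
      have hx1 : ((n:ℝ) + k) ∈ Set.Ici (1:ℝ) := Set.mem_Ici.2 (hargk _ (Nat.cast_nonneg k))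
      have hx2 : ((n:ℝ) + k + 2) ∈ Set.Ici (1:ℝ) := Set.mem_Ici.2 (by
        have := hargk (k:ℝ) (Nat.cast_nonneg k); linarith)
      have key := hconv.2 hx1 hx2 (by norm_num : (0:ℝ) ≤ 1/2) (by norm_num : (0:ℝ) ≤ 1/2)
        (by norm_num)
      rw [smul_eq_mul, smul_eq_mul, smul_eq_mul, smul_eq_mul] at key
      have harg : (1/2 : ℝ) * ((n:ℝ) + k) + (1/2 : ℝ) * ((n:ℝ) + k + 2) = (n:ℝ) + k + 1 := by ring
      rw [harg] at key
      have e1 : a (k+1) = ψ ((n:ℝ) + k + 1) := ha1 k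
      have e2 : a (k+2) = ψ ((n:ℝ) + k + 2) := by
        simp only [ha]; congr 1; push_cast; ring
      have e0 : a k = ψ ((n:ℝ) + k) := rfl
      rw [e0, e1, e2]
      linarith
    have hanonneg : ∀ k : ℕ, 0 ≤ a k := fun k =>
      (hpos _ (hargk _ (Nat.cast_nonneg k))).le
    -- partial sums converge to PsiN
    set S : ℕ → ℝ := fun M => ∑ k ∈ Finset.range M, a k * e k with hS
    have hSsucc : ∀ M : ℕ, S (M+1) = ψ n / 2 +
        ∑ k ∈ Finset.range M, ψ ((n:ℝ) + k + 1) * Real.cos (((k:ℝ)+1) * t) := by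
      intro M
      simp only [hS]
      rw [Finset.sum_range_succ', add_comm]
      congr 1
      · simp only [ha, he, if_pos rfl, Nat.cast_zero, add_zero]
        ring
      · apply Finset.sum_congr rfl
        intro i _
        simp only [ha, he]
        rw [if_neg (by omega)]
        have e1 : ((n:ℝ) + ((1+i : ℕ) : ℝ)) = (n:ℝ) + (i:ℝ) + 1 := by push_cast; ring
        have e2 : (((1+i : ℕ) : ℝ)) * t = ((i:ℝ)+1) * t := by push_cast; ring
        rw [show (i + 1 : ℕ) = 1 + i from by omega] at *
        rw [e1, e2]
    have htend : Tendsto (fun M => S (M+1)) atTop (nhds (PsiN ψ n t)) := by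
      rw [hPsiNdef]
      have := (hsumc.hasSum.tendsto_sum_nat).const_add (ψ n / 2)
      apply this.congr
      intro M
      exact (hSsucc M).symm
    have htend2 : Tendsto (fun M => S (M+2)) atTop (nhds (PsiN ψ n t)) :=
      htend.comp (tendsto_add_atTop_nat 1)
    have hbound : ∀ M : ℕ, -(a (M+1) * (1 / (2 * |s|))) ≤ S (M+2) := by
      intro M
      have habel1 : S (M+2) = ∑ k ∈ Finset.range (M+1), (a k - a (k+1)) * D k
          + a (M+1) * D (M+1) := by
        simp only [hS, hD]
        exact abel_sum a e (M+1)
      have habel2 : ∑ k ∈ Finset.range (M+1), (a k - a (k+1)) * D k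
          = ∑ k ∈ Finset.range M, ((a k - a (k+1)) - (a (k+1) - a (k+2))) * KK k
            + (a M - a (M+1)) * KK M := by
        simp only [hKK]
        exact abel_sum (fun k => a k - a (k+1)) D M
      have h1 : 0 ≤ ∑ k ∈ Finset.range M, ((a k - a (k+1)) - (a (k+1) - a (k+2))) * KK k :=
        Finset.sum_nonneg fun k _ => mul_nonneg (by linarith [hΔ2 k]) (hKnn k)
      have h2 : 0 ≤ (a M - a (M+1)) * KK M :=
        mul_nonneg (by linarith [hΔ M]) (hKnn M)
      have h3 : a (M+1) * D (M+1) ≥ -(a (M+1) * (1 / (2 * |s|))) := by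
        have := hDabs (M+1)
        have h4 := hanonneg (M+1)
        have h5 : -(1 / (2 * |s|)) ≤ D (M+1) := by
          rw [abs_le] at this; exact this.1
        nlinarith
      rw [habel1, habel2]
      linarith
    have hlim0 : Tendsto (fun M : ℕ => -(a (M+1) * (1 / (2 * |s|)))) atTop (nhds 0) := by
      have h1 : Tendsto (fun M : ℕ => (n:ℝ) + (M+1)) atTop atTop := by
        apply tendsto_atTop_add_const_left
        apply tendsto_atTop_add_const_right
        exact tendsto_natCast_atTop_atTop
      have h2 : Tendsto (fun M : ℕ => a (M+1)) atTop (nhds 0) := by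
        have := h0.comp h1
        apply this.congr
        intro M
        simp only [Function.comp, ha]
        congr 1
        push_cast; ring
      have := (h2.mul_const (1 / (2 * |s|))).neg
      simpa using this
    have hfinal := le_of_tendsto_of_tendsto' hlim0 htend2 hbound
    simpa using hfinal

lemma grid_cos {n : ℕ} (hn : 1 ≤ n) (β : ℝ) (m : ℕ) (hdvd : ¬ (2*n ∣ (m+1))) :
    ∑ k ∈ Finset.range (2*n), Real.cos (((m:ℝ)+1) * xPt β n (k:ℤ)) = 0 := by
  have hnR : (0:ℝ) < n := by exact_mod_cast hn
  set θ : ℝ := ((m:ℝ)+1) * ((1+β)*π/(2*n)) with hθ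
  set δ : ℝ := ((m:ℝ)+1)*π/(n:ℝ) with hδ
  have harg : ∀ k : ℕ, ((m:ℝ)+1) * xPt β n (k:ℤ) = θ + k*δ := by
    intro k
    simp only [xPt, hθ, hδ]
    push_cast
    ring
  set z : ℂ := Complex.exp (δ * Complex.I) with hz
  have hterm : ∀ k : ℕ, Real.cos (θ + k*δ) = (Complex.exp ((θ:ℂ) * Complex.I) * z^k).re := by
    intro k
    rw [← Complex.exp_ofReal_mul_I_re (θ + k*δ)]
    congr 2
    rw [hz, ← Complex.exp_nat_mul, ← Complex.exp_add]
    congr 1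
    push_cast
    ring
  have hz1 : z ≠ 1 := by
    intro h
    obtain ⟨ℓ, hℓ⟩ := Complex.exp_eq_one_iff.1 h
    have him : δ = (ℓ:ℝ) * (2*π) := by
      have := congrArg Complex.im hℓ
      simpa using this
    have hℕ : ((m:ℝ)+1) = (2*n : ℝ) * (ℓ:ℝ) := by
      rw [hδ] at him
      field_simp at him
      nlinarith [Real.pi_pos, him]
    have hint : ((m:ℤ)+1) = (2*(n:ℤ)) * ℓ := by exact_mod_cast hℕ
    have hdvd' : ((2*n : ℕ) : ℤ) ∣ (((m+1) : ℕ) : ℤ) := by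
      push_cast
      exact ⟨ℓ, by linarith [hint]⟩
    exact hdvd (Int.ofNat_dvd.mp hdvd')
  have hz2n : z^(2*n) = 1 := by
    rw [hz, ← Complex.exp_nat_mul]
    have hnC : ((n:ℕ) : ℂ) ≠ 0 := Nat.cast_ne_zero.2 (by omega)
    have : ((2*n : ℕ) : ℂ) * ((δ:ℂ) * Complex.I) = ((m:ℤ)+1) * (2*(π:ℂ)*Complex.I) := by
      rw [hδ]
      push_cast
      field_simp
    rw [this]
    exact_mod_cast Complex.exp_int_mul_two_pi_mul_I ((m:ℤ)+1)
  have hgeom : ∑ k ∈ Finset.range (2*n), z^k = 0 := by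
    rw [geom_sum_eq hz1, hz2n]
    simp
  calc ∑ k ∈ Finset.range (2*n), Real.cos (((m:ℝ)+1) * xPt β n (k:ℤ))
      = ∑ k ∈ Finset.range (2*n), (Complex.exp ((θ:ℂ) * Complex.I) * z^k).re := by
        apply Finset.sum_congr rfl
        intro k _
        rw [harg k, hterm k]
  _ = (∑ k ∈ Finset.range (2*n), Complex.exp ((θ:ℂ) * Complex.I) * z^k).re := by
        rw [Complex.re_sum]
  _ = (Complex.exp ((θ:ℂ) * Complex.I) * ∑ k ∈ Finset.range (2*n), z^k).re := by
        rw [Finset.mul_sum]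
  _ = 0 := by rw [hgeom, mul_zero, Complex.zero_re]

lemma grid_psiN {ψ : ℝ → ℝ} {n : ℕ} (hn : 1 ≤ n) (β : ℝ)
    (hanti : AntitoneOn ψ (Set.Ici 1)) (hpos : ∀ t ≥ (1:ℝ), 0 < ψ t)
    (hsum : Summable (fun k : ℕ => ψ ((n:ℝ) + k + 1)))
    {B : ℝ} (htail : ∀ K : ℕ, ∑ k ∈ Finset.range K, ψ ((n:ℝ) + k + 1) ≤ B) :
    ∑ k ∈ Finset.range (2*n), PsiN ψ n (xPt β n (k:ℤ)) ≤ (n:ℝ) * ψ n + B := by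
  have hn1 : (1:ℝ) ≤ (n:ℝ) := by exact_mod_cast hn
  have hpsik : ∀ m : ℕ, 0 < ψ ((n:ℝ) + m + 1) := fun m =>
    hpos _ (by linarith [Nat.cast_nonneg (α := ℝ) m])
  have hsumc : ∀ x : ℝ, Summable (fun m : ℕ => ψ ((n:ℝ) + m + 1) * Real.cos (((m:ℝ)+1) * x)) := by
    intro x
    apply Summable.of_norm_bounded hsum
    intro m
    rw [Real.norm_eq_abs, abs_mul]
    calc |ψ ((n:ℝ) + m + 1)| * |Real.cos (((m:ℝ)+1)*x)| ≤ |ψ ((n:ℝ) + m + 1)| * 1 :=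
          mul_le_mul_of_nonneg_left (Real.abs_cos_le_one _) (abs_nonneg _)
    _ = ψ ((n:ℝ) + m + 1) := by rw [mul_one, abs_of_nonneg (hpsik m).le]
  -- interchange
  have hswap : ∑ k ∈ Finset.range (2*n), PsiN ψ n (xPt β n (k:ℤ))
      = (2*n : ℝ) * (ψ n / 2) + ∑' m : ℕ, (ψ ((n:ℝ) + m + 1) *
          ∑ k ∈ Finset.range (2*n), Real.cos (((m:ℝ)+1) * xPt β n (k:ℤ))) := by
    simp only [PsiN]
    rw [Finset.sum_add_distrib, Finset.sum_const, Finset.card_range]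
    congr 1
    · push_cast; ring
    · have hts := Summable.tsum_finsetSum (f := fun (k:ℕ) (m:ℕ) =>
        ψ ((n:ℝ) + m + 1) * Real.cos (((m:ℝ)+1) * xPt β n (k:ℤ)))
        (s := Finset.range (2*n)) (fun k _ => hsumc (xPt β n (k:ℤ)))
      rw [← hts]
      apply tsum_congr
      intro m
      rw [Finset.mul_sum]
  set p : ℕ → ℝ := fun m => if 2*n ∣ (m+1) then (2*n:ℝ) * ψ ((n:ℝ)+m+1) else 0 with hp
  have hpnonneg : ∀ m, 0 ≤ p m := by
    intro m
    simp only [hp]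
    split
    · exact mul_nonneg (by positivity) (hpsik m).le
    · exact le_rfl
  have hpbound : ∀ m, |p m| ≤ (2*n:ℝ) * ψ ((n:ℝ)+m+1) := by
    intro m
    rw [abs_of_nonneg (hpnonneg m)]
    simp only [hp]
    split
    · exact le_rfl
    · exact mul_nonneg (by positivity) (hpsik m).le
  have hpsummable : Summable p := by
    apply Summable.of_norm_bounded (hsum.mul_left (2*n:ℝ))
    intro m
    rw [Real.norm_eq_abs]
    exact hpbound m
  have hCsummable : Summable (fun m : ℕ => ψ ((n:ℝ) + m + 1) *
      ∑ k ∈ Finset.range (2*n), Real.cos (((m:ℝ)+1) * xPt β n (k:ℤ))) := by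
    apply Summable.of_norm_bounded (hsum.mul_left (2*n:ℝ))
    intro m
    rw [Real.norm_eq_abs, abs_mul, abs_of_nonneg (hpsik m).le]
    have : |∑ k ∈ Finset.range (2*n), Real.cos (((m:ℝ)+1) * xPt β n (k:ℤ))| ≤ (2*n:ℝ) := by
      calc |∑ k ∈ Finset.range (2*n), Real.cos (((m:ℝ)+1) * xPt β n (k:ℤ))|
          ≤ ∑ k ∈ Finset.range (2*n), |Real.cos (((m:ℝ)+1) * xPt β n (k:ℤ))| :=
            Finset.abs_sum_le_sum_abs _ _
      _ ≤ ∑ k ∈ Finset.range (2*n), 1 :=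
            Finset.sum_le_sum fun k _ => Real.abs_cos_le_one _
      _ = (2*n:ℝ) := by rw [Finset.sum_const, Finset.card_range]; push_cast; ring
    calc ψ ((n:ℝ)+m+1) * |∑ k ∈ Finset.range (2*n), Real.cos (((m:ℝ)+1) * xPt β n (k:ℤ))|
        ≤ ψ ((n:ℝ)+m+1) * (2*n:ℝ) := mul_le_mul_of_nonneg_left this (hpsik m).le
    _ = (2*n:ℝ) * ψ ((n:ℝ)+m+1) := by ring
  have hle : ∀ m : ℕ, ψ ((n:ℝ) + m + 1) *
      (∑ k ∈ Finset.range (2*n), Real.cos (((m:ℝ)+1) * xPt β n (k:ℤ))) ≤ p m := by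
    intro m
    by_cases hd : 2*n ∣ (m+1)
    · simp only [hp, if_pos hd]
      have hC : ∑ k ∈ Finset.range (2*n), Real.cos (((m:ℝ)+1) * xPt β n (k:ℤ)) ≤ (2*n:ℝ) := by
        calc ∑ k ∈ Finset.range (2*n), Real.cos (((m:ℝ)+1) * xPt β n (k:ℤ))
            ≤ ∑ k ∈ Finset.range (2*n), 1 := Finset.sum_le_sum fun k _ => Real.cos_le_one _
        _ = (2*n:ℝ) := by rw [Finset.sum_const, Finset.card_range]; push_cast; ring
      calc ψ ((n:ℝ)+m+1) * (∑ k ∈ Finset.range (2*n), Real.cos (((m:ℝ)+1) * xPt β n (k:ℤ)))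
          ≤ ψ ((n:ℝ)+m+1) * (2*n:ℝ) := mul_le_mul_of_nonneg_left hC (hpsik m).le
      _ = (2*n:ℝ) * ψ ((n:ℝ)+m+1) := by ring
    · rw [grid_cos hn β m hd, mul_zero]
      simp only [hp, if_neg hd]
      exact le_rfl
  have htsum_le : ∑' m : ℕ, (ψ ((n:ℝ) + m + 1) *
      ∑ k ∈ Finset.range (2*n), Real.cos (((m:ℝ)+1) * xPt β n (k:ℤ))) ≤ ∑' m, p m :=
    Summable.tsum_le_tsum hle hCsummable hpsummable
  -- partial sums of p bounded by B
  have claim1 : ∀ L : ℕ, ∑ m ∈ Finset.range (2*n*L), p m ≤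
      ∑ k ∈ Finset.range (2*n*L), ψ ((n:ℝ) + k + 1) := by
    intro L
    induction L with
    | zero => simp
    | succ L ih =>
        rw [Nat.mul_succ, Finset.sum_range_add, Finset.sum_range_add]
        apply add_le_add ih
        have hstep : ∑ i ∈ Finset.range (2*n), p (2*n*L + i)
            = (2*n:ℝ) * ψ ((n:ℝ) + (2*n*L + (2*n-1) : ℕ) + 1) := by
          rw [Finset.sum_eq_single (2*n-1)]
          · simp only [hp]
            rw [if_pos]
            exact ⟨L+1, by rw [Nat.mul_succ]; omega⟩
          · intro i hi hne
            simp only [hp]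
            rw [if_neg]
            intro hdvd
            have h2 : 2*n ∣ (i+1) := (Nat.dvd_add_right ⟨L, rfl⟩).mp (by
              rw [← add_assoc]; exact hdvd)
            have := Nat.le_of_dvd (by omega) h2
            simp only [Finset.mem_range] at hi
            omega
          · intro h
            exfalso
            apply h
            simp only [Finset.mem_range]
            omega
        rw [hstep]
        have hterm : ∀ i ∈ Finset.range (2*n),
            ψ ((n:ℝ) + (2*n*L + (2*n-1) : ℕ) + 1) ≤ ψ ((n:ℝ) + (2*n*L + i : ℕ) + 1) := by
          intro i hi
          simp only [Finset.mem_range] at hi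
          apply hanti
          · simp only [Set.mem_Ici]
            have : (0:ℝ) ≤ ((2*n*L + i : ℕ) : ℝ) := Nat.cast_nonneg _
            linarith
          · simp only [Set.mem_Ici]
            have : (0:ℝ) ≤ ((2*n*L + (2*n-1) : ℕ) : ℝ) := Nat.cast_nonneg _
            linarith
          · have : (2*n*L + i : ℕ) ≤ (2*n*L + (2*n-1) : ℕ) := by omega
            have := (Nat.cast_le (α := ℝ)).2 this
            linarith
        calc (2*n:ℝ) * ψ ((n:ℝ) + (2*n*L + (2*n-1) : ℕ) + 1)
            = ∑ i ∈ Finset.range (2*n), ψ ((n:ℝ) + (2*n*L + (2*n-1) : ℕ) + 1) := by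
              rw [Finset.sum_const, Finset.card_range, nsmul_eq_mul]; push_cast; ring
        _ ≤ ∑ i ∈ Finset.range (2*n), ψ ((n:ℝ) + (2*n*L + i : ℕ) + 1) :=
              Finset.sum_le_sum hterm
  have claim2 : ∀ M : ℕ, ∑ m ∈ Finset.range M, p m ≤ B := by
    intro M
    have hsub : Finset.range M ⊆ Finset.range (2*n*M) :=
      Finset.range_subset_range.2 (Nat.le_mul_of_pos_left M (by omega))
    calc ∑ m ∈ Finset.range M, p m ≤ ∑ m ∈ Finset.range (2*n*M), p m :=
          Finset.sum_le_sum_of_subset_of_nonneg hsub (fun i _ _ => hpnonneg i)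
    _ ≤ ∑ k ∈ Finset.range (2*n*M), ψ ((n:ℝ) + k + 1) := claim1 M
    _ ≤ B := htail _
  have htsum_p : ∑' m, p m ≤ B := Real.tsum_le_of_sum_range_le hpnonneg claim2
  rw [hswap]
  have : (2*n:ℝ) * (ψ n / 2) = (n:ℝ) * ψ n := by ring
  rw [this]
  linarith

lemma cos_add_nat_pi (x : ℝ) (k : ℕ) : Real.cos (x + k*π) = (-1:ℝ)^k * Real.cos x := by
  induction k with
  | zero => simp
  | succ k ih =>
      have : x + ((k:ℕ)+1:ℕ)*π = (x + k*π) + π := by push_cast; ring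
      rw [this, Real.cos_add_pi, ih]
      push_cast
      ring

lemma core_integral {φ ω : ℝ → ℝ} {n : ℕ} (hn : 1 ≤ n)
    (hφc : Continuous φ)
    (hmod : ∀ t : ℝ, 0 ≤ t → ∀ x h : ℝ, |h| ≤ t → |φ (x + h) - φ x| ≤ ω t)
    (hωc : ContinuousOn ω (Set.Ici 0)) (y : ℝ) :
    |∫ s in (0:ℝ)..(π/n), φ (y - s) * Real.cos (n * s)| ≤
      (∫ t in (0:ℝ)..(π/2), ω (2 * t / n) * Real.sin t) / n := by
  have hn0 : (0:ℝ) < n := by exact_mod_cast hn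
  have hπ : (0:ℝ) < π := Real.pi_pos
  set c2 : ℝ := π / (2*n) with hc2
  have hc2pos : 0 < c2 := by positivity
  have hhalf : π/(n:ℝ) - c2 = c2 := by rw [hc2]; field_simp; ring
  have h2c2 : 2*c2 = π/(n:ℝ) := by rw [hc2]; field_simp
  have hnc2 : (n:ℝ) * c2 = π/2 := by rw [hc2]; field_simp
  set f : ℝ → ℝ := fun s => φ (y - s) * Real.cos (n * s) with hf
  have hfc : Continuous f := by
    apply Continuous.mul
    · exact hφc.comp (continuous_const.sub continuous_id)
    · exact Real.continuous_cos.comp (continuous_const.mul continuous_id)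
  have hint1 : IntervalIntegrable f volume 0 c2 := hfc.intervalIntegrable _ _
  have hint2 : IntervalIntegrable f volume c2 (π/n) := hfc.intervalIntegrable _ _
  have e0 : ∀ u : ℝ, f (π/(n:ℝ) - u) = -(φ (y - π/(n:ℝ) + u) * Real.cos ((n:ℝ)*u)) := by
    intro u
    simp only [hf]
    have harg1 : y - (π/(n:ℝ) - u) = y - π/(n:ℝ) + u := by ring
    have harg2 : (n:ℝ) * (π/(n:ℝ) - u) = π - (n:ℝ)*u := by field_simp
    rw [harg1, harg2, Real.cos_pi_sub]
    ring
  have h2' : ∫ s in c2..(π/(n:ℝ)), f s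
      = ∫ u in (0:ℝ)..c2, -(φ (y - π/(n:ℝ) + u) * Real.cos ((n:ℝ)*u)) := by
    have hcs := intervalIntegral.integral_comp_sub_left (a := (0:ℝ)) (b := c2) f (π/(n:ℝ))
    rw [sub_zero, hhalf] at hcs
    rw [← hcs]
    apply intervalIntegral.integral_congr
    intro u _
    exact e0 u
  have hg1 : Continuous (fun u : ℝ => φ (y - π/(n:ℝ) + u) * Real.cos ((n:ℝ)*u)) := by
    apply Continuous.mul
    · exact hφc.comp (by continuity)
    · exact Real.continuous_cos.comp (continuous_const.mul continuous_id)
  have hI : ∫ s in (0:ℝ)..(π/(n:ℝ)), f s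
      = ∫ s in (0:ℝ)..c2, (φ (y - s) - φ (y - π/(n:ℝ) + s)) * Real.cos ((n:ℝ)*s) := by
    rw [← intervalIntegral.integral_add_adjacent_intervals hint1 hint2, h2',
      intervalIntegral.integral_neg, ← sub_eq_add_neg]
    rw [← intervalIntegral.integral_sub hint1 (hg1.intervalIntegrable _ _)]
    apply intervalIntegral.integral_congr
    intro s _
    simp only [hf]
    ring
  set W : ℝ → ℝ := fun s => ω (π/(n:ℝ) - 2*s) * Real.cos ((n:ℝ)*s) with hW
  have hWc : ContinuousOn W (Set.Icc 0 c2) := by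
    apply ContinuousOn.mul
    · apply hωc.comp
      · exact (continuous_const.sub (continuous_const.mul continuous_id)).continuousOn
      · intro s hs
        simp only [Set.mem_Icc] at hs
        simp only [Set.mem_Ici]
        nlinarith [hs.2, h2c2]
    · exact (Real.continuous_cos.comp (continuous_const.mul continuous_id)).continuousOn
  have hWint : IntervalIntegrable W volume 0 c2 := by
    apply ContinuousOn.intervalIntegrable
    rwa [Set.uIcc_of_le hc2pos.le]
  have hptwise : ∀ s ∈ Set.Icc (0:ℝ) c2,
      |(φ (y - s) - φ (y - π/(n:ℝ) + s)) * Real.cos ((n:ℝ)*s)| ≤ W s := by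
    intro s hs
    simp only [Set.mem_Icc] at hs
    have hcosnn : 0 ≤ Real.cos ((n:ℝ)*s) := by
      apply Real.cos_nonneg_of_mem_Icc
      constructor
      · nlinarith [hs.1, hπ]
      · nlinarith [hs.2, hnc2, hs.1]
    have hdiff : |φ (y - s) - φ (y - π/(n:ℝ) + s)| ≤ ω (π/(n:ℝ) - 2*s) := by
      have htnn : (0:ℝ) ≤ π/(n:ℝ) - 2*s := by nlinarith [hs.2, h2c2]
      have := hmod (π/(n:ℝ) - 2*s) htnn (y - π/(n:ℝ) + s) (π/(n:ℝ) - 2*s)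
        (by rw [abs_of_nonneg htnn])
      rw [show y - π/(n:ℝ) + s + (π/(n:ℝ) - 2*s) = y - s by ring] at this
      exact this
    rw [abs_mul, abs_of_nonneg hcosnn]
    exact mul_le_mul_of_nonneg_right hdiff hcosnn
  have hb1 : |∫ s in (0:ℝ)..c2, (φ (y - s) - φ (y - π/(n:ℝ) + s)) * Real.cos ((n:ℝ)*s)|
      ≤ ∫ s in (0:ℝ)..c2, W s := by
    calc |∫ s in (0:ℝ)..c2, (φ (y - s) - φ (y - π/(n:ℝ) + s)) * Real.cos ((n:ℝ)*s)|
        ≤ ∫ s in (0:ℝ)..c2, |(φ (y - s) - φ (y - π/(n:ℝ) + s)) * Real.cos ((n:ℝ)*s)| :=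
          intervalIntegral.abs_integral_le_integral_abs hc2pos.le
    _ ≤ ∫ s in (0:ℝ)..c2, W s := by
          apply intervalIntegral.integral_mono_on hc2pos.le _ hWint hptwise
          exact ((hφc.comp (continuous_const.sub continuous_id)).sub
            (hφc.comp (by continuity))).mul
            (Real.continuous_cos.comp (continuous_const.mul continuous_id))
            |>.abs.intervalIntegrable _ _
  -- evaluate ∫ W
  have heval : ∫ s in (0:ℝ)..c2, W s
      = (∫ t in (0:ℝ)..(π/2), ω (2 * t / n) * Real.sin t) / n := by
    have hrefl := intervalIntegral.integral_comp_sub_left (a := (0:ℝ)) (b := c2) W c2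
    rw [sub_zero, sub_self] at hrefl
    have e1 : ∀ v : ℝ, W (c2 - v) = ω (2*v) * Real.sin ((n:ℝ)*v) := by
      intro v
      simp only [hW]
      have a1 : π/(n:ℝ) - 2*(c2 - v) = 2*v := by rw [← h2c2]; ring
      have a2 : (n:ℝ)*(c2 - v) = π/2 - (n:ℝ)*v := by rw [← hnc2]; ring
      rw [a1, a2, Real.cos_pi_div_two_sub]
    have hstep1 : ∫ s in (0:ℝ)..c2, W s = ∫ v in (0:ℝ)..c2, ω (2*v) * Real.sin ((n:ℝ)*v) := by
      rw [← hrefl]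
      apply intervalIntegral.integral_congr
      intro v _
      exact e1 v
    have hscale := intervalIntegral.integral_comp_mul_left
      (a := (0:ℝ)) (b := c2) (fun u => ω (2*u/(n:ℝ)) * Real.sin u) (ne_of_gt hn0)
    rw [mul_zero, hnc2] at hscale
    have e2 : ∀ x : ℝ, ω (2*((n:ℝ)*x)/(n:ℝ)) * Real.sin ((n:ℝ)*x) = ω (2*x) * Real.sin ((n:ℝ)*x) := by
      intro x
      congr 2
      field_simp
    rw [hstep1]
    have : ∫ v in (0:ℝ)..c2, ω (2*v) * Real.sin ((n:ℝ)*v)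
        = ∫ v in (0:ℝ)..c2, ω (2*((n:ℝ)*v)/(n:ℝ)) * Real.sin ((n:ℝ)*v) := by
      apply intervalIntegral.integral_congr
      intro v _
      exact (e2 v).symm
    rw [this, hscale, smul_eq_mul]
    ring
  calc |∫ s in (0:ℝ)..(π/(n:ℝ)), φ (y - s) * Real.cos ((n:ℝ) * s)|
      = |∫ s in (0:ℝ)..c2, (φ (y - s) - φ (y - π/(n:ℝ) + s)) * Real.cos ((n:ℝ)*s)| := by
        rw [← hI]
  _ ≤ ∫ s in (0:ℝ)..c2, W s := hb1
  _ = (∫ t in (0:ℝ)..(π/2), ω (2 * t / n) * Real.sin t) / n := heval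

lemma eN_nonneg {ω : ℝ → ℝ} {n : ℕ} (hn : 1 ≤ n) (hωnn : ∀ t ≥ (0:ℝ), 0 ≤ ω t) :
    0 ≤ ∫ t in (0:ℝ)..(π/2), ω (2*t/n) * Real.sin t := by
  have hn0 : (0:ℝ) < n := by exact_mod_cast hn
  apply intervalIntegral.integral_nonneg (by positivity : (0:ℝ) ≤ π/2)
  intro u hu
  apply mul_nonneg
  · apply hωnn
    have := hu.1
    positivity
  · exact Real.sin_nonneg_of_nonneg_of_le_pi hu.1 (le_trans hu.2 (by linarith [Real.pi_pos]))

lemma eN_le_four_omega {ω : ℝ → ℝ} {n : ℕ} (hn : 1 ≤ n)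
    (hωc : ContinuousOn ω (Set.Ici 0)) (hmono : MonotoneOn ω (Set.Ici 0))
    (hsub : ∀ s t : ℝ, 0 ≤ s → 0 ≤ t → ω (s+t) ≤ ω s + ω t)
    (hωnn : ∀ t ≥ (0:ℝ), 0 ≤ ω t) :
    (∫ t in (0:ℝ)..(π/2), ω (2*t/n) * Real.sin t) ≤ 4 * ω (1/n) := by
  have hn0 : (0:ℝ) < n := by exact_mod_cast hn
  have hπ : (0:ℝ) < π := Real.pi_pos
  have hnn1 : (0:ℝ) ≤ 1/(n:ℝ) := by positivity
  have hω1 : 0 ≤ ω (1/(n:ℝ)) := hωnn _ hnn1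
  have step1 : (∫ t in (0:ℝ)..(π/2), ω (2*t/n) * Real.sin t)
      ≤ ∫ t in (0:ℝ)..(π/2), ω (π/n) * Real.sin t := by
    apply intervalIntegral.integral_mono_on (by positivity)
    · apply ContinuousOn.intervalIntegrable
      rw [Set.uIcc_of_le (by positivity)]
      apply ContinuousOn.mul
      · apply hωc.comp ((continuous_const.mul continuous_id).div_const _).continuousOn
        intro t ht
        simp only [Set.mem_Icc] at ht
        have := ht.1
        simp only [Set.mem_Ici, id_eq]
        show (0:ℝ) ≤ 2 * t / n
        positivity
      · exact Real.continuous_sin.continuousOn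
    · exact (continuous_const.mul Real.continuous_sin).intervalIntegrable _ _
    · intro t ht
      simp only [Set.mem_Icc] at ht
      have hsinn : 0 ≤ Real.sin t :=
        Real.sin_nonneg_of_nonneg_of_le_pi ht.1 (by linarith)
      apply mul_le_mul_of_nonneg_right _ hsinn
      apply hmono
      · simp only [Set.mem_Ici]
        have := ht.1
        positivity
      · simp only [Set.mem_Ici]; positivity
      · exact (div_le_div_iff_of_pos_right hn0).2 (by linarith)
  have step2 : ∫ t in (0:ℝ)..(π/2), ω (π/n) * Real.sin t = ω (π/(n:ℝ)) := by
    rw [intervalIntegral.integral_const_mul, integral_sin]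
    simp
  have step3 : ω (π/(n:ℝ)) ≤ ω (4/(n:ℝ)) := by
    apply hmono
    · simp only [Set.mem_Ici]; positivity
    · simp only [Set.mem_Ici]; positivity
    · exact (div_le_div_iff_of_pos_right hn0).2 (by linarith [Real.pi_le_four])
  have step4 : ω (4/(n:ℝ)) ≤ 4 * ω (1/(n:ℝ)) := by
    have h2 : ω (2/(n:ℝ)) ≤ 2 * ω (1/(n:ℝ)) := by
      have := hsub (1/(n:ℝ)) (1/(n:ℝ)) hnn1 hnn1
      rw [show (1:ℝ)/(n:ℝ) + 1/(n:ℝ) = 2/(n:ℝ) by ring] at this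
      linarith
    have hnn2 : (0:ℝ) ≤ 2/(n:ℝ) := by positivity
    have h4 : ω (4/(n:ℝ)) ≤ 2 * ω (2/(n:ℝ)) := by
      have := hsub (2/(n:ℝ)) (2/(n:ℝ)) hnn2 hnn2
      rw [show (2:ℝ)/(n:ℝ) + 2/(n:ℝ) = 4/(n:ℝ) by ring] at this
      linarith
    linarith
  calc (∫ t in (0:ℝ)..(π/2), ω (2*t/n) * Real.sin t)
      ≤ ∫ t in (0:ℝ)..(π/2), ω (π/n) * Real.sin t := step1
  _ = ω (π/(n:ℝ)) := step2
  _ ≤ ω (4/(n:ℝ)) := step3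
  _ ≤ 4 * ω (1/(n:ℝ)) := step4

lemma stepIdx_eq {β : ℝ} {n : ℕ} (hn : 1 ≤ n) (k : ℕ) (t : ℝ)
    (h1 : β * π / (2*n) + k * (π/n) ≤ t) (h2 : t < β * π / (2*n) + ((k:ℝ)+1) * (π/n)) :
    stepIdx β n t = (k:ℤ) := by
  have hn0 : (0:ℝ) < n := by exact_mod_cast hn
  have hπ : (0:ℝ) < π := Real.pi_pos
  rw [stepIdx, Int.floor_eq_iff]
  have hlow : (k:ℝ) * π ≤ (t - β * π / (2*n)) * n := by
    have h1' : (k:ℝ) * (π/n) ≤ t - β * π / (2*n) := by linarith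
    have := mul_le_mul_of_nonneg_right h1' hn0.le
    calc (k:ℝ) * π = (k:ℝ) * (π/n) * n := by field_simp
    _ ≤ (t - β * π / (2*n)) * n := this
  have hhigh : (t - β * π / (2*n)) * n < ((k:ℝ)+1) * π := by
    have h2' : t - β * π / (2*n) < ((k:ℝ)+1) * (π/n) := by linarith
    have := mul_lt_mul_of_pos_right h2' hn0
    calc (t - β * π / (2*n)) * n < ((k:ℝ)+1) * (π/n) * n := this
    _ = ((k:ℝ)+1) * π := by field_simp
  constructor
  · push_cast
    rw [le_div_iff₀ hπ]
    exact hlow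
  · push_cast
    rw [div_lt_iff₀ hπ]
    linarith

lemma main_bound {ψ ω φ : ℝ → ℝ} {n : ℕ} (hn : 1 ≤ n) (β : ℝ)
    (hφH : φ ∈ HClassC ω) (hωc : ContinuousOn ω (Set.Ici 0))
    (hPsiNnn : ∀ t, 0 ≤ PsiN ψ n t) (hEN : 0 ≤ eN n ω / n)
    {B : ℝ} (hgrid : ∑ k ∈ Finset.range (2*n), PsiN ψ n (xPt β n (k:ℤ)) ≤ (n:ℝ) * ψ n + B)
    (x : ℝ) :
    |∫ t in (0:ℝ)..(2*π), φ (x - t) * Real.cos (n * t - β * π / 2) * PsiBar ψ β n t|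
      ≤ ((n:ℝ) * ψ n + B) * (eN n ω / n) := by
  obtain ⟨hφc, hφper, hφmod⟩ := hφH
  have hn0 : (0:ℝ) < n := by exact_mod_cast hn
  have hπ : (0:ℝ) < π := Real.pi_pos
  set g : ℝ → ℝ := fun t => φ (x - t) * Real.cos (n * t - β * π / 2) * PsiBar ψ β n t with hg
  set t₀ : ℝ := β * π / (2*n) with ht₀
  set a : ℕ → ℝ := fun k => t₀ + k * (π/n) with ha
  have hak : ∀ k : ℕ, a (k+1) = a k + π/n := by
    intro k; simp only [ha]; push_cast; ring
  have hle : ∀ k : ℕ, a k ≤ a (k+1) := by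
    intro k; rw [hak k]; have : 0 < π/(n:ℝ) := by positivity
    linarith
  have hPsiNper : ∀ u : ℝ, PsiN ψ n (u + 2*π) = PsiN ψ n u := by
    intro u
    simp only [PsiN]
    congr 1
    apply tsum_congr
    intro k
    congr 1
    rw [show ((k:ℝ)+1)*(u+2*π) = ((k:ℝ)+1)*u + (((k+1:ℕ)):ℤ)*(2*π) by push_cast; ring]
    exact Real.cos_add_int_mul_two_pi _ _
  have hper : Function.Periodic g (2*π) := by
    intro t
    simp only [hg]
    have e1 : φ (x - (t + 2*π)) = φ (x - t) := by
      rw [show x - t = (x - (t + 2*π)) + 2*π by ring]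
      exact (hφper _).symm
    have e2 : Real.cos ((n:ℝ)*(t+2*π) - β*π/2) = Real.cos ((n:ℝ)*t - β*π/2) := by
      rw [show (n:ℝ)*(t+2*π) - β*π/2 = ((n:ℝ)*t - β*π/2) + ((n:ℕ):ℤ)*(2*π) by push_cast; ring]
      exact Real.cos_add_int_mul_two_pi _ _
    have e3 : PsiBar ψ β n (t + 2*π) = PsiBar ψ β n t := by
      have hstep : stepIdx β n (t + 2*π) = stepIdx β n t + (2*n : ℤ) := by
        simp only [stepIdx]
        rw [show (t + 2*π - β*π/(2*(n:ℝ))) * (n:ℝ) / π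
            = (t - β*π/(2*(n:ℝ))) * (n:ℝ) / π + ((2*n : ℤ) : ℝ) by push_cast; field_simp; ring]
        rw [Int.floor_add_intCast]
      have hxpt : xPt β n (stepIdx β n t + (2*n : ℤ)) = xPt β n (stepIdx β n t) + 2*π := by
        simp only [xPt]
        push_cast
        field_simp
        ring
      simp only [PsiBar]
      rw [hstep, hxpt, hPsiNper]
    rw [e1, e2, e3]
  have hshift : ∫ t in (0:ℝ)..(2*π), g t = ∫ t in t₀..(t₀+2*π), g t := by
    have := hper.intervalIntegral_add_eq t₀ 0
    simpa using this.symm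
  have hstep_eq : ∀ k : ℕ, ∀ t ∈ Set.Ico (a k) (a (k+1)), stepIdx β n t = (k:ℤ) := by
    intro k t ht
    apply stepIdx_eq hn k t
    · have := ht.1; simp only [ha] at this; exact this
    · have := ht.2; simp only [ha] at this; push_cast at this; exact this
  have hintint : ∀ k : ℕ, IntervalIntegrable g volume (a k) (a (k+1)) ∧
      |∫ t in (a k)..(a (k+1)), g t| ≤ PsiN ψ n (xPt β n (k:ℤ)) * (eN n ω / n) := by
    intro k
    set hk : ℝ → ℝ := fun t => φ (x - t) * Real.cos ((n:ℝ) * t - β * π / 2)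
      * PsiN ψ n (xPt β n (k:ℤ)) with hhk
    have hkc : Continuous hk := by
      apply Continuous.mul
      · apply Continuous.mul
        · exact hφc.comp (continuous_const.sub continuous_id)
        · exact Real.continuous_cos.comp (by continuity)
      · exact continuous_const
    have hae : ∀ᵐ t ∂(volume : Measure ℝ), t ∈ Set.uIoc (a k) (a (k+1)) → g t = hk t := by
      rw [ae_iff]
      apply measure_mono_null _ (measure_singleton (a (k+1)))
      intro t ht
      simp only [Set.mem_setOf_eq, Classical.not_imp] at ht
      obtain ⟨htmem, hne⟩ := ht
      rw [Set.mem_singleton_iff]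
      by_contra hne2
      apply hne
      rw [Set.uIoc_of_le (hle k)] at htmem
      have htIco : t ∈ Set.Ico (a k) (a (k+1)) :=
        ⟨htmem.1.le, lt_of_le_of_ne htmem.2 hne2⟩
      simp only [hg, hhk, PsiBar]
      rw [hstep_eq k t htIco]
    have hInt : IntervalIntegrable g volume (a k) (a (k+1)) := by
      rw [intervalIntegrable_iff]
      have h1 : IntegrableOn hk (Set.uIoc (a k) (a (k+1))) volume := by
        rw [← intervalIntegrable_iff]
        exact hkc.intervalIntegrable _ _
      apply h1.congr_fun_ae
      rw [Filter.eventuallyEq_comm]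
      exact (ae_restrict_iff' measurableSet_uIoc).2 hae
    have hIeq : ∫ t in (a k)..(a (k+1)), g t = ∫ t in (a k)..(a (k+1)), hk t :=
      intervalIntegral.integral_congr_ae hae
    have hint_hk : ∫ t in (a k)..(a (k+1)), hk t
        = (∫ t in (a k)..(a (k+1)), φ (x - t) * Real.cos ((n:ℝ) * t - β * π / 2))
          * PsiN ψ n (xPt β n (k:ℤ)) := by
      simp only [hhk]
      exact intervalIntegral.integral_mul_const _ _
    have hPk : ∫ t in (a k)..(a (k+1)), φ (x - t) * Real.cos ((n:ℝ) * t - β * π / 2)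
        = ∫ s in (0:ℝ)..(π/n), φ ((x - a k) - s) * ((-1:ℝ)^k * Real.cos ((n:ℝ)*s)) := by
      have hc := intervalIntegral.integral_comp_add_left (a := (0:ℝ)) (b := π/(n:ℝ))
        (fun t => φ (x - t) * Real.cos ((n:ℝ) * t - β * π / 2)) (a k)
      rw [add_zero, ← hak k] at hc
      rw [← hc]
      apply intervalIntegral.integral_congr
      intro s _
      have harg : x - (a k + s) = (x - a k) - s := by ring
      have hcosarg : (n:ℝ) * (a k + s) - β * π / 2 = (n:ℝ)*s + (k:ℕ)*π := by
        simp only [ha, ht₀]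
        field_simp
        try ring
      simp only []
      rw [harg, hcosarg, cos_add_nat_pi]
      try ring
    have hcore := core_integral hn hφc hφmod hωc (x - a k)
    have habs : |∫ t in (a k)..(a (k+1)), g t| ≤ PsiN ψ n (xPt β n (k:ℤ)) * (eN n ω / n) := by
      rw [hIeq, hint_hk, abs_mul, abs_of_nonneg (hPsiNnn _), hPk]
      have hout : ∫ s in (0:ℝ)..(π/n), φ ((x - a k) - s) * ((-1:ℝ)^k * Real.cos ((n:ℝ)*s))
          = (-1:ℝ)^k * ∫ s in (0:ℝ)..(π/n), φ ((x - a k) - s) * Real.cos ((n:ℝ)*s) := by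
        rw [← intervalIntegral.integral_const_mul]
        apply intervalIntegral.integral_congr
        intro s _
        ring
      rw [hout, abs_mul, abs_pow, abs_neg, abs_one, one_pow, one_mul, mul_comm]
      exact mul_le_mul_of_nonneg_left hcore (hPsiNnn _)
    exact ⟨hInt, habs⟩
  have hsum_int := intervalIntegral.sum_integral_adjacent_intervals
    (a := a) (n := 2*n) (fun k _ => (hintint k).1)
  have ha0 : a 0 = t₀ := by simp [ha]
  have ha2n : a (2*n) = t₀ + 2*π := by
    simp only [ha]
    push_cast
    field_simp
  calc |∫ t in (0:ℝ)..(2*π), g t| = |∫ t in t₀..(t₀+2*π), g t| := by rw [hshift]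
  _ = |∑ k ∈ Finset.range (2*n), ∫ t in (a k)..(a (k+1)), g t| := by
      rw [← ha2n, ← ha0, hsum_int]
  _ ≤ ∑ k ∈ Finset.range (2*n), |∫ t in (a k)..(a (k+1)), g t| :=
      Finset.abs_sum_le_sum_abs _ _
  _ ≤ ∑ k ∈ Finset.range (2*n), PsiN ψ n (xPt β n (k:ℤ)) * (eN n ω / n) :=
      Finset.sum_le_sum fun k _ => (hintint k).2
  _ = (∑ k ∈ Finset.range (2*n), PsiN ψ n (xPt β n (k:ℤ))) * (eN n ω / n) := by
      rw [Finset.sum_mul]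
  _ ≤ ((n:ℝ) * ψ n + B) * (eN n ω / n) := by
      apply mul_le_mul_of_nonneg_right hgrid hEN

set_option maxHeartbeats 1600000 in
/-- Lemma 1: `I_n(ψ,β,ω)_C ≤ (2/π) ψ(n) e_n(ω) + O(1) ψ(n+1)(1/n + 1/(μ(n)−2)) ω(1/n)`
whenever `μ(n) > 2`. -/
theorem statement11 :
    ∃ K : ℝ, 0 < K ∧ ∀ ψ η : ℝ → ℝ, IsMInfPlus ψ η → ∀ β : ℝ, ∀ ω : ℝ → ℝ,
      IsModulus ω → ∀ n : ℕ,
      2 < (n : ℝ) / (η n - n) →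
      In ψ β ω n ≤ (2 / π) * ψ n * eN n ω +
        K * ψ (n + 1) * (1 / n + 1 / ((n : ℝ) / (η n - n) - 2)) * ω (1 / n) := by
  refine ⟨128, by norm_num, ?_⟩
  intro ψ η hM β ω hω n hμ
  obtain ⟨hψpos, hψcont, hψconv, hψ0, hη, hmono, -⟩ := hM
  obtain ⟨hωc, hωm, hωsub, hω0, hωnn⟩ := hω
  have hπ : (0:ℝ) < π := Real.pi_pos
  have hn : 1 ≤ n := by
    by_contra h
    push_neg at h
    have hn0 : n = 0 := by omega
    rw [hn0] at hμ
    simp at hμ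
    linarith
  have hn1 : (1:ℝ) ≤ (n:ℝ) := by exact_mod_cast hn
  have hn0 : (0:ℝ) < n := by linarith
  set d : ℝ := η (n:ℝ) - (n:ℝ) with hd_def
  have hd : 0 < d := by
    have := (hη (n:ℝ) hn1).1
    simp only [hd_def]
    linarith
  set μ : ℝ := (n:ℝ) / d with hμ_def
  have hμ2 : 2 < μ := hμ
  have hμ2' : (0:ℝ) < μ - 2 := by linarith
  set ρ : ℝ := 1 + d / n with hρ_def
  have hρ1 : 1 < ρ := by
    simp only [hρ_def]
    have : 0 < d / (n:ℝ) := by positivity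
    linarith
  have hanti : AntitoneOn ψ (Set.Ici 1) := psi_anti hψpos hψconv hψ0
  have hhalf : ∀ t, ((n:ℝ)+1) ≤ t → ψ (ρ * t) ≤ ψ t / 2 := by
    intro t ht
    have htn : (n:ℝ) ≤ t := by linarith
    have ht1 : (1:ℝ) ≤ t := by linarith
    have hηt := hη t ht1
    have hηtpos : 0 < η t - t := by linarith [hηt.1]
    have hmt := hmono (Set.mem_Ici.2 hn1) (Set.mem_Ici.2 ht1) htn
    simp only at hmt
    have hikey : η t ≤ ρ * t := by
      have h1 : (n:ℝ)/d ≤ t/(η t - t) := hmt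
      have h2 : (n:ℝ) * (η t - t) ≤ t * d := by
        rw [div_le_div_iff₀ hd hηtpos] at h1
        linarith
      have h3 : η t - t ≤ t * d / n := by
        rw [le_div_iff₀ hn0]
        nlinarith
      calc η t = t + (η t - t) := by ring
      _ ≤ t + t * d / n := by linarith
      _ = ρ * t := by simp only [hρ_def]; field_simp
    have hηt1 : (1:ℝ) ≤ η t := by linarith [hηt.1]
    calc ψ (ρ * t) ≤ ψ (η t) :=
          hanti (Set.mem_Ici.2 hηt1) (Set.mem_Ici.2 (by nlinarith : (1:ℝ) ≤ ρ * t)) hikey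
    _ = ψ t / 2 := hηt.2
  set α : ℝ := Real.log 2 / Real.log ρ with hα_def
  have hlρpos : 0 < Real.log ρ := Real.log_pos hρ1
  have hl2 : 0.6931471803 < Real.log 2 := Real.log_two_gt_d9
  have hαμ : μ * Real.log 2 ≤ α := by
    have h1 : Real.log ρ ≤ d / n := by
      have := Real.log_le_sub_one_of_pos (show 0 < ρ by linarith)
      simp only [hρ_def] at this
      linarith
    have hdn : 0 < d/(n:ℝ) := by positivity
    have h2 : Real.log 2 / (d/(n:ℝ)) ≤ Real.log 2 / Real.log ρ :=
      div_le_div_of_nonneg_left (by linarith) hlρpos h1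
    calc μ * Real.log 2 = Real.log 2 / (d/(n:ℝ)) := by
          simp only [hμ_def]
          field_simp
    _ ≤ α := h2
  have hα1 : 1 < α := by nlinarith
  have hαd2 : (μ - 2) / 8 ≤ α - 1 := by nlinarith
  have hα1' : (0:ℝ) < α - 1 := by linarith
  set b : ℝ := (n:ℝ) + 1 with hb_def
  have hb1 : (1:ℝ) ≤ b := by simp only [hb_def]; linarith
  have hψb : 0 < ψ b := hψpos b (by linarith)
  set B : ℝ := ψ b * (1 + 2 * b / (α - 1)) with hB_def
  have hBnn : 0 ≤ B := by
    apply mul_nonneg hψb.le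
    have : 0 ≤ 2 * b / (α - 1) := by positivity
    linarith
  have htail : ∀ K : ℕ, ∑ k ∈ Finset.range K, ψ ((n:ℝ) + k + 1) ≤ B := by
    intro K
    have hpt := psi_tail_partial hanti hb1 hρ1 hhalf hψb.le
      (fun t ht => (hψpos t ht).le) hα1 K
    calc ∑ k ∈ Finset.range K, ψ ((n:ℝ) + k + 1)
        = ∑ k ∈ Finset.range K, ψ (b + k) := by
          apply Finset.sum_congr rfl
          intro k _
          congr 1
          simp only [hb_def]
          ring
    _ ≤ B := hpt
  have hsum : Summable (fun k : ℕ => ψ ((n:ℝ) + k + 1)) := by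
    apply summable_of_sum_range_le (c := B) _ htail
    intro k
    exact (hψpos _ (by linarith [Nat.cast_nonneg (α := ℝ) k])).le
  have hPsiNnn : ∀ t, 0 ≤ PsiN ψ n t := psiN_nonneg hn hanti hψpos hψconv hψ0 hsum
  have hgrid := grid_psiN hn β hanti hψpos hsum htail
  have heN : 0 ≤ eN n ω := eN_nonneg hn hωnn
  have heN4 : eN n ω ≤ 4 * ω (1/(n:ℝ)) := eN_le_four_omega hn hωc hωm hωsub hωnn
  have hω1 : 0 ≤ ω (1/(n:ℝ)) := hωnn _ (by positivity)
  have hBle : B ≤ ψ b * (1 + 32*(n:ℝ)/(μ - 2)) := by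
    apply mul_le_mul_of_nonneg_left _ hψb.le
    have e1 : 1/(α-1) ≤ 8/(μ-2) := by
      rw [div_le_div_iff₀ hα1' hμ2']
      linarith
    have e2 : 2*b/(α-1) ≤ 32*(n:ℝ)/(μ-2) := by
      have h3 : 2*b/(α-1) = 2*b*(1/(α-1)) := by ring
      have h4 : 2*b*(1/(α-1)) ≤ 2*b*(8/(μ-2)) := by
        apply mul_le_mul_of_nonneg_left e1
        simp only [hb_def]; linarith
      have h5 : 2*b*(8/(μ-2)) = 16*b/(μ-2) := by ring
      have h6 : 16*b/(μ-2) ≤ 32*(n:ℝ)/(μ-2) := by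
        apply (div_le_div_iff_of_pos_right hμ2').2
        simp only [hb_def]; linarith
      linarith
    linarith
  have hKterm : B * (eN n ω / n) ≤ 128 * ψ ((n:ℝ)+1) * (1/(n:ℝ) + 1/(μ-2)) * ω (1/(n:ℝ)) := by
    have h1 : B * (eN n ω / n) ≤ (ψ b * (1 + 32*(n:ℝ)/(μ-2))) * (4 * ω (1/(n:ℝ)) / n) := by
      apply mul_le_mul hBle _ (by positivity) _
      · exact (div_le_div_iff_of_pos_right hn0).2 heN4
      · apply mul_nonneg hψb.le
        have : 0 ≤ 32*(n:ℝ)/(μ-2) := by positivity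
        linarith
    have h2 : (ψ b * (1 + 32*(n:ℝ)/(μ-2))) * (4 * ω (1/(n:ℝ)) / n)
        = 4 * ψ b * ω (1/(n:ℝ)) * (1/(n:ℝ) + 32/(μ-2)) := by
      field_simp
    have h3 : 4 * ψ b * ω (1/(n:ℝ)) * (1/(n:ℝ) + 32/(μ-2))
        ≤ 4 * ψ b * ω (1/(n:ℝ)) * (32 * (1/(n:ℝ) + 1/(μ-2))) := by
      apply mul_le_mul_of_nonneg_left
      · have p1 : (0:ℝ) < 1/(n:ℝ) := by positivity
        have p2 : (0:ℝ) < 1/(μ-2) := by positivity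
        have : 32/(μ-2) = 32 * (1/(μ-2)) := by ring
        rw [this]
        linarith
      · have : 0 ≤ 4 * ψ b := by linarith
        exact mul_nonneg this hω1
    have h4 : 4 * ψ b * ω (1/(n:ℝ)) * (32 * (1/(n:ℝ) + 1/(μ-2)))
        = 128 * ψ ((n:ℝ)+1) * (1/(n:ℝ) + 1/(μ-2)) * ω (1/(n:ℝ)) := by
      simp only [hb_def]
      ring
    linarith
  have hmain : ∀ φ, φ ∈ HClassC ω → ∀ x : ℝ,
      |∫ t in (0:ℝ)..(2*π), φ (x - t) * Real.cos (n * t - β * π / 2) * PsiBar ψ β n t|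
      ≤ ψ (n:ℝ) * eN n ω + B * (eN n ω / n) := by
    intro φ hφ x
    have hmb := main_bound hn β hφ hωc hPsiNnn (by positivity) hgrid x
    have hre : ((n:ℝ) * ψ (n:ℝ) + B) * (eN n ω / (n:ℝ))
        = ψ (n:ℝ) * eN n ω + B * (eN n ω / (n:ℝ)) := by
      field_simp
    linarith [hmb, hre.le, hre.ge]
  have hψn : 0 < ψ (n:ℝ) := hψpos _ hn1
  have hRHSnn : 0 ≤ (2 / π) * ψ (n:ℝ) * eN n ω +
      128 * ψ ((n:ℝ) + 1) * (1 / (n:ℝ) + 1 / (μ - 2)) * ω (1 / (n:ℝ)) := by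
    have t1 : 0 ≤ (2 / π) * ψ (n:ℝ) * eN n ω := by positivity
    have t2 : 0 ≤ 128 * ψ ((n:ℝ) + 1) * (1 / (n:ℝ) + 1 / (μ - 2)) * ω (1 / (n:ℝ)) := by
      apply mul_nonneg _ hω1
      apply mul_nonneg _ (by positivity)
      have := hψpos ((n:ℝ)+1) (by linarith)
      linarith
    linarith
  show In ψ β ω n ≤ _
  unfold In
  apply Real.sSup_le _ hRHSnn
  rintro e ⟨φ, hφ, rfl⟩
  have hsup : (⨆ x : ℝ, |∫ t in (0:ℝ)..(2*π),
      φ (x - t) * Real.cos (n * t - β * π / 2) * PsiBar ψ β n t|)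
      ≤ ψ (n:ℝ) * eN n ω + B * (eN n ω / n) :=
    ciSup_le (fun x => hmain φ hφ x)
  have h2π : (2:ℝ)/π ≤ 1 := by
    rw [div_le_one hπ]
    linarith [Real.two_le_pi]
  have hBeN : 0 ≤ B * (eN n ω / n) := mul_nonneg hBnn (by positivity)
  calc (2 / π) * (⨆ x : ℝ, |∫ t in (0:ℝ)..(2*π),
        φ (x - t) * Real.cos (n * t - β * π / 2) * PsiBar ψ β n t|)
      ≤ (2 / π) * (ψ (n:ℝ) * eN n ω + B * (eN n ω / n)) :=
        mul_le_mul_of_nonneg_left hsup (by positivity)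
  _ = (2 / π) * ψ (n:ℝ) * eN n ω + (2 / π) * (B * (eN n ω / n)) := by ring
  _ ≤ (2 / π) * ψ (n:ℝ) * eN n ω +
        128 * ψ ((n:ℝ) + 1) * (1 / (n:ℝ) + 1 / (μ - 2)) * ω (1 / (n:ℝ)) := by
      have hs : (2 / π) * (B * (eN n ω / n)) ≤ B * (eN n ω / n) := by
        nlinarith [hBeN, h2π, div_nonneg (by norm_num : (0:ℝ) ≤ 2) hπ.le]
      linarith [hKterm]
end
end

section
/- Let g:ℝ→ℝ be a 2π-periodic function of bounded variation, let n∈ℕ, a∈ℝ, and set t_k = a + kπ/n and x_k = t_k + π/(2n) for k∈ℤ. Let ḡ be the step function with ḡ(t)=g(x_k) for t∈[t_k,t_{k+1}). Then ∫_{t_0}^{t_0+2π}|g(t)−ḡ(t)|dt ≤ (π/n)·V(g;[t_0,t_0+2π]), where V(g;[t_0,t_0+2π]) is the total variation of g over one period. -/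
open Real MeasureTheory

noncomputable section

/-- If `g` is `2π`-periodic of bounded variation, `t_k = a + kπ/n`, `x_k = t_k + π/(2n)`,
and `ḡ` is the step function equal to `g(x_k)` on `[t_k, t_{k+1})`, then
`∫_{t_0}^{t_0+2π} |g − ḡ| ≤ (π/n)·V(g; [t_0, t_0+2π])`. -/
theorem statement12 (g : ℝ → ℝ) (n : ℕ) (hn : 0 < n) (a : ℝ)
    (hper : Function.Periodic g (2 * π))
    (hbv : BoundedVariationOn g (Set.Icc a (a + 2 * π)))
    (gbar : ℝ → ℝ)
    (hgbar : ∀ k : ℤ, ∀ t : ℝ, a + k * π / n ≤ t → t < a + (k + 1) * π / n →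
      gbar t = g (a + k * π / n + π / (2 * n))) :
    (∫ t in a..(a + 2 * π), |g t - gbar t|) ≤
      (π / n) * (eVariationOn g (Set.Icc a (a + 2 * π))).toReal := by
  have hπ : (0:ℝ) < π := Real.pi_pos
  have hn' : (0:ℝ) < n := by exact_mod_cast hn
  have hd : (0:ℝ) < π / n := div_pos hπ hn'
  set T : ℕ → ℝ := fun k => a + k * π / n with hT
  have hTsucc : ∀ k : ℕ, T (k+1) = T k + π / n := by
    intro k; simp only [hT]; push_cast; ring
  have hTle : ∀ k : ℕ, T k ≤ T (k+1) := fun k => by rw [hTsucc]; linarith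
  have hT0 : T 0 = a := by simp [hT]
  have hT2n : T (2*n) = a + 2*π := by
    simp only [hT]; push_cast; field_simp
  have hmono : Monotone T := monotone_nat_of_le_succ hTle
  have hsub : ∀ k, k < 2*n → Set.Icc (T k) (T (k+1)) ⊆ Set.Icc a (a + 2*π) := by
    intro k hk
    apply Set.Icc_subset_Icc
    · rw [← hT0]; exact hmono (Nat.zero_le k)
    · rw [← hT2n]; exact hmono hk
  have hV : eVariationOn g (Set.Icc a (a + 2*π)) ≠ ⊤ := hbv
  have hfin : ∀ k, k < 2*n → eVariationOn g (Set.Icc (T k) (T (k+1))) ≠ ⊤ := by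
    intro k hk
    exact ne_top_of_le_ne_top hV (eVariationOn.mono g (hsub k hk))
  -- per-interval bound
  have key : ∀ k, k < 2*n → (∫ t in T k..T (k+1), |g t - gbar t|) ≤
      (π/n) * (eVariationOn g (Set.Icc (T k) (T (k+1)))).toReal := by
    intro k hk
    have hbv' : BoundedVariationOn g (Set.Icc (T k) (T (k+1))) := hfin k hk
    have h2 : π/(2*n) ≤ π/n := by
      rw [div_le_div_iff₀ (by positivity) (by positivity)]; nlinarith
    have h2' : (0:ℝ) < π/(2*n) := by positivity
    have hxk : T k + π / (2*↑n) ∈ Set.Icc (T k) (T (k+1)) := by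
      constructor
      · linarith
      · rw [hTsucc]; linarith
    set C := (eVariationOn g (Set.Icc (T k) (T (k+1)))).toReal with hC
    have hae : ∀ᵐ t : ℝ, t ∈ Set.uIoc (T k) (T (k+1)) → ‖|g t - gbar t|‖ ≤ C := by
      have h1 : ∀ᵐ t : ℝ, t ≠ T (k+1) := by
        rw [Filter.eventually_iff, mem_ae_iff]
        convert measure_singleton (T (k+1)) using 2
        · ext t; simp
        · infer_instance
      filter_upwards [h1] with t ht htmem
      rw [Set.uIoc_of_le (hTle k)] at htmem
      have htlt : t < T (k+1) := lt_of_le_of_ne htmem.2 ht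
      have hgb : gbar t = g (T k + π / (2*↑n)) := by
        have := hgbar (k : ℤ) t (by push_cast; exact le_of_lt htmem.1)
          (by push_cast; rw [hTsucc] at htlt; simp only [hT] at htlt; ring_nf; ring_nf at htlt; linarith)
        simpa [hT] using this
      rw [hgb, Real.norm_eq_abs, abs_abs, ← Real.dist_eq]
      exact hbv'.dist_le ⟨le_of_lt htmem.1, le_of_lt htlt⟩ hxk
    have hb := intervalIntegral.norm_integral_le_of_norm_le_const_ae hae
    have habs : |T (k+1) - T k| = π/n := by
      rw [hTsucc]; rw [abs_of_pos] <;> [ring_nf; linarith]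
    rw [habs] at hb
    calc (∫ t in T k..T (k+1), |g t - gbar t|)
        ≤ ‖∫ t in T k..T (k+1), |g t - gbar t|‖ := le_abs_self _
      _ ≤ C * (π/n) := hb
      _ = (π/n) * C := mul_comm _ _
  -- sum of variations
  have hsum : ∀ m : ℕ, m ≤ 2*n →
      ∑ k ∈ Finset.range m, eVariationOn g (Set.Icc (T k) (T (k+1)))
        = eVariationOn g (Set.Icc (T 0) (T m)) := by
    intro m
    induction m with
    | zero =>
      intro _
      simp [eVariationOn.subsingleton g (by simp [Set.Subsingleton] : (Set.Icc (T 0) (T 0)).Subsingleton)]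
    | succ m ih =>
      intro hm
      rw [Finset.sum_range_succ, ih (le_of_lt (Nat.lt_of_succ_le hm))]
      have := eVariationOn.Icc_add_Icc g (s := Set.univ)
        (hmono (Nat.zero_le m)) (hTle m) (Set.mem_univ (T m))
      simpa using this
  by_cases hint : IntervalIntegrable (fun t => |g t - gbar t|) volume a (a + 2*π)
  · have hints : ∀ k, k < 2*n → IntervalIntegrable (fun t => |g t - gbar t|) volume (T k) (T (k+1)) := by
      intro k hk
      apply hint.mono_set
      rw [Set.uIcc_of_le (hTle k), Set.uIcc_of_le (by linarith)]
      exact hsub k hk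
    have hsplit := intervalIntegral.sum_integral_adjacent_intervals
      (a := T) (n := 2*n) (μ := volume) (f := fun t => |g t - gbar t|) hints
    rw [hT0, hT2n] at hsplit
    rw [← hsplit]
    calc ∑ k ∈ Finset.range (2*n), ∫ t in T k..T (k+1), |g t - gbar t|
        ≤ ∑ k ∈ Finset.range (2*n), (π/n) * (eVariationOn g (Set.Icc (T k) (T (k+1)))).toReal := by
          apply Finset.sum_le_sum
          intro k hk
          exact key k (Finset.mem_range.mp hk)
      _ = (π/n) * ∑ k ∈ Finset.range (2*n), (eVariationOn g (Set.Icc (T k) (T (k+1)))).toReal := by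
          rw [Finset.mul_sum]
      _ = (π/n) * (∑ k ∈ Finset.range (2*n), eVariationOn g (Set.Icc (T k) (T (k+1)))).toReal := by
          rw [ENNReal.toReal_sum]
          intro k hk
          exact hfin k (Finset.mem_range.mp hk)
      _ = (π/n) * (eVariationOn g (Set.Icc a (a + 2*π))).toReal := by
          rw [hsum (2*n) le_rfl, hT0, hT2n]
  · rw [intervalIntegral.integral_undef hint]
    positivity
end
end

section
/- If ψ∈𝔐_∞^+, then for every n∈ℕ one has lim_{k→∞} k·ψ(n+k) = 0. -/
open Real MeasureTheory Filter

noncomputable section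

/-- Auxiliary: `t * ψ t → 0` as `t → ∞` for `ψ ∈ 𝔐_∞^+`. -/
lemma aux_mul_tendsto (ψ η : ℝ → ℝ) (hψ : IsMInfPlus ψ η) :
    Tendsto (fun t : ℝ => t * ψ t) atTop (nhds 0) := by
  obtain ⟨hpos, _hcont, hconv, hlim, hη, _hμmono, hμtop⟩ := hψ
  -- ψ is antitone on [1, ∞)
  have hanti : AntitoneOn ψ (Set.Ici 1) := by
    intro a ha b hb hab
    rcases eq_or_lt_of_le hab with rfl | hab'
    · exact le_rfl
    by_contra hlt
    push_neg at hlt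
    have hb0 : 0 < ψ b := hpos b hb
    obtain ⟨z, hz1, hz2⟩ :=
      ((hlim.eventually (gt_mem_nhds hb0)).and (eventually_gt_atTop b)).exists
    have hslope := hconv.slope_mono_adjacent ha (Set.mem_Ici.mpr (le_trans hb hz2.le)) hab' hz2
    have h1 : 0 < (ψ b - ψ a) / (b - a) := div_pos (by linarith) (by linarith)
    have h2 : (ψ z - ψ b) / (z - b) < 0 := div_neg_of_neg_of_pos (by linarith) (by linarith)
    linarith
  -- base point where μ ≥ 3
  obtain ⟨a, ha⟩ := eventually_atTop.mp (hμtop.eventually_ge_atTop 3)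
  set t₀ : ℝ := max a 1 with ht₀def
  have ht₀1 : (1:ℝ) ≤ t₀ := le_max_right a 1
  have hkey : ∀ t, t₀ ≤ t → η t ≤ 4/3 * t := by
    intro t ht
    have ht1 : (1:ℝ) ≤ t := le_trans ht₀1 ht
    have hηt := hη t ht1
    have hd : 0 < η t - t := by linarith [hηt.1]
    have h3 : 3 ≤ t / (η t - t) := ha t (le_trans (le_max_left a 1) ht)
    have := (le_div_iff₀ hd).mp h3
    linarith
  -- the iterates of η starting at t₀
  set T : ℕ → ℝ := fun j => η^[j] t₀ with hTdef
  have hTsucc : ∀ j, T (j+1) = η (T j) := by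
    intro j; simp [hTdef, Function.iterate_succ_apply']
  have hT : ∀ j, t₀ ≤ T j ∧ T j ≤ t₀ * (4/3)^j ∧ ψ (T j) = ψ t₀ / 2^j := by
    intro j
    induction j with
    | zero => refine ⟨le_rfl, by simp [hTdef], by simp [hTdef]⟩
    | succ m ih =>
      obtain ⟨ih1, ih2, ih3⟩ := ih
      have h1 : (1:ℝ) ≤ T m := le_trans ht₀1 ih1
      have hηm := hη (T m) h1
      constructor
      · rw [hTsucc]; linarith [hηm.1]
      constructor
      · rw [hTsucc]
        calc η (T m) ≤ 4/3 * T m := hkey (T m) ih1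
          _ ≤ 4/3 * (t₀ * (4/3)^m) := by nlinarith
          _ = t₀ * (4/3)^(m+1) := by ring
      · rw [hTsucc, hηm.2, ih3]; rw [pow_succ]; ring
  have hTlt : ∀ j, T j < T (j+1) := by
    intro j
    rw [hTsucc]
    exact (hη (T j) (le_trans ht₀1 (hT j).1)).1
  have hTmono : Monotone T := monotone_nat_of_le_succ fun j => (hTlt j).le
  -- T j → ∞
  have hTtop : ∀ M : ℝ, ∃ j, M < T j := by
    intro M
    set M' : ℝ := max M 1 with hM'def
    have hM'1 : (1:ℝ) ≤ M' := le_max_right M 1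
    have hψM' : 0 < ψ M' := hpos M' hM'1
    have hψt₀ : 0 < ψ t₀ := hpos t₀ ht₀1
    obtain ⟨j, hj⟩ := exists_pow_lt_of_lt_one (div_pos hψM' hψt₀) (by norm_num : (1:ℝ)/2 < 1)
    refine ⟨j, ?_⟩
    by_contra hle
    push_neg at hle
    have hTj1 : (1:ℝ) ≤ T j := le_trans ht₀1 (hT j).1
    have : ψ M' ≤ ψ (T j) := hanti (Set.mem_Ici.mpr hTj1) (Set.mem_Ici.mpr hM'1)
      (le_trans hle (le_max_left M 1))
    have heq : ψ (T j) = ψ t₀ * (1/2)^j := by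
      rw [(hT j).2.2, div_pow, one_pow]; ring
    have : ψ t₀ * (1/2)^j < ψ t₀ * (ψ M' / ψ t₀) := by
      exact mul_lt_mul_of_pos_left hj hψt₀
    rw [mul_div_cancel₀ _ (ne_of_gt hψt₀)] at this
    linarith
  -- main estimate
  rw [NormedAddCommGroup.tendsto_nhds_zero]
  intro ε hε
  have hψt₀ : 0 < ψ t₀ := hpos t₀ ht₀1
  set C : ℝ := 4/3 * (t₀ * ψ t₀) with hCdef
  have hC : 0 < C := by positivity
  obtain ⟨J, hJ⟩ := exists_pow_lt_of_lt_one (div_pos hε hC) (by norm_num : (2:ℝ)/3 < 1)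
  filter_upwards [eventually_ge_atTop (T J)] with t ht
  have ht₀t : t₀ ≤ t := le_trans (hT J).1 ht
  have ht1 : (1:ℝ) ≤ t := le_trans ht₀1 ht₀t
  have hex : ∃ j, t < T (j+1) := by
    obtain ⟨j, hj⟩ := hTtop t
    cases j with
    | zero => exact absurd hj (by simpa [hTdef] using not_lt.mpr ht₀t)
    | succ m => exact ⟨m, hj⟩
  set j : ℕ := Nat.find hex with hjdef
  have hj : t < T (j+1) := Nat.find_spec hex
  have hTjle : T j ≤ t := by
    cases hjj : j with
    | zero => simpa [hTdef] using ht₀t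
    | succ m =>
      have := Nat.find_min hex (by omega : m < j)
      push_neg at this
      simpa [hjj] using this
  have hJj : J ≤ j := by
    by_contra hlt
    push_neg at hlt
    have : T (j+1) ≤ T J := hTmono (by omega)
    linarith
  have hψt : 0 ≤ ψ t := (hpos t ht1).le
  have hψTj : 0 ≤ ψ (T j) := (hpos (T j) (le_trans ht₀1 (hT j).1)).le
  have hb1 : t * ψ t ≤ T (j+1) * ψ (T j) := by
    apply mul_le_mul hj.le
      (hanti (Set.mem_Ici.mpr (le_trans ht₀1 (hT j).1)) (Set.mem_Ici.mpr ht1) hTjle)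
      hψt (by linarith [(hT (j+1)).1, ht₀1])
  have hb2 : T (j+1) * ψ (T j) ≤ (t₀ * (4/3)^(j+1)) * (ψ t₀ / 2^j) := by
    apply mul_le_mul (hT (j+1)).2.1 (le_of_eq (hT j).2.2) hψTj
    positivity
  have hb3 : (t₀ * (4/3:ℝ)^(j+1)) * (ψ t₀ / 2^j) = C * (2/3)^j := by
    have h23 : ((2:ℝ)/3)^j = (4/3)^j / 2^j := by
      rw [← div_pow]; norm_num
    rw [hCdef, h23, pow_succ]
    field_simp
  have hb4 : C * (2/3:ℝ)^j ≤ C * (2/3)^J := by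
    apply mul_le_mul_of_nonneg_left _ hC.le
    exact pow_le_pow_of_le_one (by norm_num) (by norm_num) hJj
  have hb5 : C * (2/3:ℝ)^J < ε := by
    have := mul_lt_mul_of_pos_left hJ hC
    rwa [mul_div_cancel₀ _ (ne_of_gt hC)] at this
  have hnn : 0 ≤ t * ψ t := mul_nonneg (by linarith) hψt
  rw [Real.norm_of_nonneg hnn]
  linarith

/-- If `ψ ∈ 𝔐_∞^+`, then `lim_{k→∞} k·ψ(n+k) = 0` for every `n ∈ ℕ`. -/
theorem statement13 (ψ η : ℝ → ℝ) (hψ : IsMInfPlus ψ η) (n : ℕ) :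
    Tendsto (fun k : ℕ => (k : ℝ) * ψ ((n : ℝ) + k)) atTop (nhds 0) := by
  have hpos := hψ.1
  have haux := aux_mul_tendsto ψ η hψ
  have harg : Tendsto (fun k : ℕ => (n : ℝ) + k) atTop atTop :=
    tendsto_atTop_add_const_left _ _ tendsto_natCast_atTop_atTop
  have h1 : Tendsto (fun k : ℕ => ((n : ℝ) + k) * ψ ((n : ℝ) + k)) atTop (nhds 0) :=
    haux.comp harg
  apply squeeze_zero' ?_ ?_ h1
  · filter_upwards [eventually_ge_atTop 1] with k hk
    have h1k : (1:ℝ) ≤ (n:ℝ) + k := by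
      have : (1:ℝ) ≤ (k:ℝ) := by exact_mod_cast hk
      have : (0:ℝ) ≤ (n:ℝ) := Nat.cast_nonneg n
      linarith
    exact mul_nonneg (Nat.cast_nonneg k) (hpos _ h1k).le
  · filter_upwards [eventually_ge_atTop 1] with k hk
    have h1k : (1:ℝ) ≤ (n:ℝ) + k := by
      have : (1:ℝ) ≤ (k:ℝ) := by exact_mod_cast hk
      have : (0:ℝ) ≤ (n:ℝ) := Nat.cast_nonneg n
      linarith
    have : (k:ℝ) ≤ (n:ℝ) + k := by
      have : (0:ℝ) ≤ (n:ℝ) := Nat.cast_nonneg n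
      linarith
    exact mul_le_mul_of_nonneg_right this (hpos _ h1k).le
end
end

section
/- Let ψ:ℕ→ℝ be a positive, nonincreasing, convex sequence (Δ²ψ(m)≥0 for all m) with lim_{m→∞}ψ(m)=0, lim_{k→∞}kψ(n+k)=0, and ∑_{k=1}^∞ψ(n+k)<∞ for a given n∈ℕ. Then ∑_{k=0}^{∞}(k+1)·|Δ²{kψ(n+k)}| ≤ 4∑_{k=1}^{∞}ψ(n+k), where Δ²{kψ(n+k)} denotes the second difference, in k, of the sequence α_k=kψ(n+k). -/
open Filter Finset

/-- Estimate (103): if `ψ : ℕ → ℝ` is positive, nonincreasing, convex, tends to zero,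
`kψ(n+k) → 0`, and `∑_{k≥1} ψ(n+k) < ∞`, then the series
`∑_{k=0}^∞ (k+1)|Δ²{kψ(n+k)}|` converges and is at most `4∑_{k=1}^∞ ψ(n+k)`. -/
theorem statement15 (ψ : ℕ → ℝ) (n : ℕ)
    (hpos : ∀ m, 0 < ψ m)
    (hdec : ∀ m, ψ (m + 1) ≤ ψ m)
    (hconv : ∀ m, 0 ≤ ψ m - 2 * ψ (m + 1) + ψ (m + 2))
    (hlim : Tendsto ψ atTop (nhds 0))
    (hklim : Tendsto (fun k : ℕ => (k : ℝ) * ψ (n + k)) atTop (nhds 0))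
    (hsum : Summable (fun k : ℕ => ψ (n + k + 1))) :
    Summable (fun k : ℕ =>
        ((k : ℝ) + 1) * |(k : ℝ) * ψ (n + k) - 2 * ((k : ℝ) + 1) * ψ (n + k + 1) +
          ((k : ℝ) + 2) * ψ (n + k + 2)|) ∧
      (∑' k : ℕ,
          ((k : ℝ) + 1) * |(k : ℝ) * ψ (n + k) - 2 * ((k : ℝ) + 1) * ψ (n + k + 1) +
            ((k : ℝ) + 2) * ψ (n + k + 2)|) ≤
        4 * ∑' k : ℕ, ψ (n + k + 1) := by
  set b : ℕ → ℝ := fun m => ψ (n + m) with hb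
  have hb0 : ∀ m, 0 ≤ b m := fun m => (hpos _).le
  have hbdec : ∀ m, b (m + 1) ≤ b m := fun m => hdec (n + m)
  have hbconv : ∀ m, 0 ≤ b m - 2 * b (m + 1) + b (m + 2) := fun m => hconv (n + m)
  set t : ℕ → ℝ := fun k =>
    ((k : ℝ) + 1) * |(k : ℝ) * ψ (n + k) - 2 * ((k : ℝ) + 1) * ψ (n + k + 1) +
      ((k : ℝ) + 2) * ψ (n + k + 2)| with ht
  set u : ℕ → ℝ := fun k =>
    (k : ℝ) * ((k : ℝ) + 1) * (b k - 2 * b (k + 1) + b (k + 2)) +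
      2 * ((k : ℝ) + 1) * (b (k + 1) - b (k + 2)) with hu
  have htu : ∀ k, t k ≤ u k := by
    intro k
    have h1 := hbconv k
    have h2 := hbdec (k + 1)
    have hk0 : (0 : ℝ) ≤ (k : ℝ) := Nat.cast_nonneg k
    have h2'' : b (k + 2) ≤ b (k + 1) := hbdec (k + 1)
    have habs : |(k : ℝ) * b k - 2 * ((k : ℝ) + 1) * b (k + 1) +
        ((k : ℝ) + 2) * b (k + 2)| ≤
        (k : ℝ) * (b k - 2 * b (k + 1) + b (k + 2)) + 2 * (b (k + 1) - b (k + 2)) := by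
      rw [abs_le]
      constructor
      · nlinarith [mul_nonneg hk0 h1]
      · nlinarith [mul_nonneg hk0 h1]
    have := mul_le_mul_of_nonneg_left habs (by positivity : (0:ℝ) ≤ (k : ℝ) + 1)
    calc t k ≤ ((k : ℝ) + 1) * ((k : ℝ) * (b k - 2 * b (k + 1) + b (k + 2)) +
          2 * (b (k + 1) - b (k + 2))) := this
      _ = u k := by simp only [hu, hb]; ring
  have key : ∀ N : ℕ, ∑ k ∈ range N, u k =
      4 * ∑ m ∈ range N, b (m + 1) - (N : ℝ) * ((N : ℝ) + 1) * b N +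
        (N : ℝ) * ((N : ℝ) - 3) * b (N + 1) := by
    intro N
    induction N with
    | zero => simp
    | succ N ih =>
      rw [sum_range_succ, sum_range_succ, ih]
      have e1 : N + 1 + 1 = N + 2 := rfl
      simp only [hu, e1]
      push_cast
      ring
  have hboundary : ∀ N : ℕ, ∑ k ∈ range N, u k ≤ 4 * ∑ m ∈ range N, b (m + 1) := by
    intro N
    rw [key N]
    have h1 := hbdec N
    have h2 := hb0 (N + 1)
    have h3 := hb0 N
    have hN : (0 : ℝ) ≤ (N : ℝ) := Nat.cast_nonneg N
    nlinarith [mul_le_mul_of_nonneg_left h1 (by positivity : (0:ℝ) ≤ (N:ℝ) + 1),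
      mul_nonneg hN h2]
  have hS : ∀ N : ℕ, ∑ m ∈ range N, b (m + 1) ≤ ∑' k : ℕ, ψ (n + k + 1) := by
    intro N
    exact Summable.sum_le_tsum (range N) (fun i _ => (hpos _).le) hsum
  have hbound : ∀ N : ℕ, ∑ k ∈ range N, t k ≤ 4 * ∑' k : ℕ, ψ (n + k + 1) := by
    intro N
    calc ∑ k ∈ range N, t k ≤ ∑ k ∈ range N, u k := sum_le_sum (fun k _ => htu k)
      _ ≤ 4 * ∑ m ∈ range N, b (m + 1) := hboundary N
      _ ≤ 4 * ∑' k : ℕ, ψ (n + k + 1) := by linarith [hS N]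
  have ht0 : ∀ k, 0 ≤ t k := fun k => by
    have : (0:ℝ) ≤ (k : ℝ) + 1 := by positivity
    exact mul_nonneg this (abs_nonneg _)
  exact ⟨summable_of_sum_range_le ht0 hbound, Summable.tsum_le_of_sum_range_le (summable_of_sum_range_le ht0 hbound) hbound⟩
end

section
/- Let ψ∈𝔐_∞^+ and let n∈ℕ be such that μ(ψ;n+1)>2. Then ∑_{k=1}^∞ψ(n+k) ≤ ψ(n+1)·(1 + 2(η(ψ;n+1)−(n+1))/(1 − 2/μ(ψ;n+1))). -/
open Real MeasureTheory Filter

noncomputable section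

/-- A convex positive function on `[1,∞)` tending to `0` at `∞` is antitone. -/
lemma convAnti {ψ : ℝ → ℝ} (hconv : ConvexOn ℝ (Set.Ici 1) ψ)
    (hlim : Tendsto ψ atTop (nhds 0)) (hpos : ∀ t ≥ (1:ℝ), 0 < ψ t) :
    AntitoneOn ψ (Set.Ici 1) := by
  intro s hs t ht hst
  rcases eq_or_lt_of_le hst with rfl | hlt
  · exact le_rfl
  by_contra hcon
  push_neg at hcon
  have hev : ∀ᶠ u in atTop, ψ u < ψ t := hlim.eventually_lt_const (hpos t ht)
  obtain ⟨u, hu1, hu2⟩ := (hev.and (eventually_gt_atTop t)).exists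
  have hmem : u ∈ Set.Ici (1:ℝ) := le_trans ht hu2.le
  have hslope := hconv.slope_mono_adjacent hs hmem hlt hu2
  have h1 : 0 < (ψ t - ψ s) / (t - s) := div_pos (by linarith) (by linarith)
  have h2 : (ψ u - ψ t) / (u - t) < 0 :=
    div_neg_of_neg_of_pos (by linarith) (by linarith)
  linarith

/-- The iterated `η`-sequence starting at `m`. -/
noncomputable def etaSeq (η : ℝ → ℝ) (m : ℝ) : ℕ → ℝ
  | 0 => m
  | j + 1 => η (etaSeq η m j)

set_option maxHeartbeats 1000000 in
/-- Estimate (108): if `ψ ∈ 𝔐_∞^+` and `μ(n+1) > 2`, then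
`∑_{k=1}^∞ ψ(n+k) ≤ ψ(n+1)(1 + 2(η(n+1)−(n+1))/(1 − 2/μ(n+1)))`. -/
theorem statement16 (ψ η : ℝ → ℝ) (hψ : IsMInfPlus ψ η) (n : ℕ)
    (hμ : 2 < ((n : ℝ) + 1) / (η ((n : ℝ) + 1) - ((n : ℝ) + 1))) :
    (∑' k : ℕ, ψ ((n : ℝ) + k + 1)) ≤
      ψ ((n : ℝ) + 1) *
        (1 + 2 * (η ((n : ℝ) + 1) - ((n : ℝ) + 1)) /
          (1 - 2 / (((n : ℝ) + 1) / (η ((n : ℝ) + 1) - ((n : ℝ) + 1))))) := by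
  obtain ⟨hpos, hcont, hconv, hlim, hη, hμmono, hμtop⟩ := hψ
  have hanti : AntitoneOn ψ (Set.Ici 1) := convAnti hconv hlim hpos
  set m : ℝ := (n : ℝ) + 1 with hmdef
  have hm1 : (1:ℝ) ≤ m := by
    rw [hmdef]; have : (0:ℝ) ≤ (n:ℝ) := Nat.cast_nonneg n; linarith
  have hm0 : (0:ℝ) < m := lt_of_lt_of_le one_pos hm1
  set d : ℝ := η m - m with hddef
  have hd : 0 < d := by rw [hddef]; exact sub_pos.mpr (hη m hm1).1
  set μ : ℝ := m / d with hμdef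
  have hμ2 : 2 < μ := hμ
  have hμ0 : (0:ℝ) < μ := by linarith
  have hψm : 0 < ψ m := hpos m hm1
  have h2μ : 0 < 1 - 2 / μ := by
    have : 2 / μ < 1 := (div_lt_one hμ0).mpr hμ2
    linarith
  have h1μ : 0 < 1 - 1 / μ := by
    have : 1 / μ < 1 := (div_lt_one hμ0).mpr (by linarith)
    linarith
  have hmμd : m / μ = d := by
    rw [hμdef]; field_simp
  set M : ℕ → ℝ := etaSeq η m with hMdef
  have hM0 : M 0 = m := rfl
  have hMs : ∀ j, M (j + 1) = η (M j) := fun j => rfl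
  have hMge : ∀ j, 1 ≤ M j ∧ M j < M (j + 1) := by
    intro j
    induction j with
    | zero => exact ⟨hm1, (hη m hm1).1⟩
    | succ j ih =>
      have h1 : 1 ≤ M (j + 1) := le_of_lt (lt_of_le_of_lt ih.1 ih.2)
      exact ⟨h1, (hη _ h1).1⟩
  have hMmono : Monotone M := monotone_nat_of_le_succ fun j => (hMge j).2.le
  have hMm : ∀ j, m ≤ M j := fun j => hM0 ▸ hMmono (Nat.zero_le j)
  have hψM : ∀ j, ψ (M j) = ψ m / 2 ^ j := by
    intro j
    induction j with
    | zero => simp [hM0]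
    | succ j ih =>
      rw [hMs, (hη _ (hMge j).1).2, ih, pow_succ]
      ring
  have hnn : ∀ t : ℝ, 1 ≤ t → 0 ≤ ψ t := fun t ht => (hpos t ht).le
  -- gap bounds
  have hgap : ∀ j, M (j + 1) - M j ≤ M j / μ := by
    intro j
    have h1 := (hMge j).1
    have hgap0 : 0 < M (j + 1) - M j := sub_pos.mpr (hMge j).2
    have hμj : μ ≤ M j / (η (M j) - M j) := by
      have := hμmono (Set.mem_Ici.mpr hm1) (Set.mem_Ici.mpr h1) (hMm j)
      simpa [hμdef, hddef] using this
    have hMj0 : 0 < M j := lt_of_lt_of_le one_pos h1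
    rw [hMs] at hgap0 ⊢
    rw [le_div_iff₀ hgap0] at hμj
    rw [le_div_iff₀ hμ0]
    nlinarith
  have hMle : ∀ j, M j ≤ m * (1 + 1 / μ) ^ j := by
    intro j
    induction j with
    | zero => simp [hM0]
    | succ j ih =>
      have hMj0 : 0 < M j := lt_of_lt_of_le one_pos (hMge j).1
      have h1 : M (j + 1) ≤ M j * (1 + 1 / μ) := by
        have := hgap j
        have : M (j + 1) ≤ M j + M j / μ := by linarith
        calc M (j + 1) ≤ M j + M j / μ := this
          _ = M j * (1 + 1 / μ) := by ring
      calc M (j + 1) ≤ M j * (1 + 1 / μ) := h1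
        _ ≤ m * (1 + 1 / μ) ^ j * (1 + 1 / μ) := by
            apply mul_le_mul_of_nonneg_right ih
            positivity
        _ = m * (1 + 1 / μ) ^ (j + 1) := by ring
  have hgapb : ∀ j, M (j + 1) - M j ≤ d * (1 + 1 / μ) ^ j := by
    intro j
    calc M (j + 1) - M j ≤ M j / μ := hgap j
      _ ≤ m * (1 + 1 / μ) ^ j / μ := by
          gcongr
          exact hMle j
      _ = d * (1 + 1 / μ) ^ j := by
          rw [mul_div_right_comm, hmμd]
  -- integrability
  have hinteg : ∀ a b : ℝ, 1 ≤ a → a ≤ b → IntervalIntegrable ψ volume a b := by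
    intro a b ha hab
    apply ContinuousOn.intervalIntegrable
    apply hcont.mono
    rw [Set.uIcc_of_le hab]
    exact fun x hx => le_trans ha hx.1
  -- block bound
  have hblock : ∀ j : ℕ, (∫ x in M j..M (j + 1), ψ x) ≤ ψ (M j) * (M (j + 1) - M j) := by
    intro j
    have h1 := (hMge j).1
    have hlt := (hMge j).2
    have hle : (∫ x in M j..M (j + 1), ψ x) ≤ ∫ _ in M j..M (j + 1), ψ (M j) :=
      intervalIntegral.integral_mono_on hlt.le (hinteg _ _ h1 hlt.le)
        intervalIntegrable_const
        (fun x hx => hanti (Set.mem_Ici.mpr h1) (Set.mem_Ici.mpr (le_trans h1 hx.1)) hx.1)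
    simpa [intervalIntegral.integral_const, smul_eq_mul, mul_comm] using hle
  set q : ℝ := (1 + 1 / μ) / 2 with hqdef
  have hq0 : 0 ≤ q := by positivity
  have hq1 : q < 1 := by
    rw [hqdef]
    have : 1 / μ < 1 := (div_lt_one hμ0).mpr (by linarith)
    linarith
  -- chain bound
  have hchain : ∀ J : ℕ, (∫ x in m..M J, ψ x) ≤ ψ m * d * ∑ j ∈ Finset.range J, q ^ j := by
    intro J
    induction J with
    | zero => simp [hM0]
    | succ J ih =>
      have hsplit : (∫ x in m..M J, ψ x) + (∫ x in M J..M (J + 1), ψ x)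
          = ∫ x in m..M (J + 1), ψ x :=
        intervalIntegral.integral_add_adjacent_intervals
          (hinteg m (M J) hm1 (hMm J)) (hinteg (M J) (M (J + 1)) (hMge J).1 (hMge J).2.le)
      have hterm : ψ (M J) * (M (J + 1) - M J) ≤ ψ m * d * q ^ J := by
        rw [hψM J]
        have h2J : (0:ℝ) < 2 ^ J := by positivity
        calc ψ m / 2 ^ J * (M (J + 1) - M J)
            ≤ ψ m / 2 ^ J * (d * (1 + 1 / μ) ^ J) := by
              apply mul_le_mul_of_nonneg_left (hgapb J)
              exact div_nonneg hψm.le h2J.le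
          _ = ψ m * d * q ^ J := by
              rw [hqdef, div_pow]
              field_simp
      calc (∫ x in m..M (J + 1), ψ x)
          = (∫ x in m..M J, ψ x) + ∫ x in M J..M (J + 1), ψ x := hsplit.symm
        _ ≤ ψ m * d * ∑ j ∈ Finset.range J, q ^ j + ψ (M J) * (M (J + 1) - M J) :=
            add_le_add ih (hblock J)
        _ ≤ ψ m * d * ∑ j ∈ Finset.range J, q ^ j + ψ m * d * q ^ J :=
            add_le_add_right hterm _
        _ = ψ m * d * ∑ j ∈ Finset.range (J + 1), q ^ j := by
            rw [Finset.sum_range_succ]; ring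
  set C : ℝ := ψ m * (2 * d / (1 - 2 / μ)) with hCdef
  have hC : ∀ J : ℕ, (∫ x in m..M J, ψ x) ≤ C := by
    intro J
    have hgeom : ∑ j ∈ Finset.range J, q ^ j ≤ (1 - q)⁻¹ := by
      have := Summable.sum_le_tsum (Finset.range J) (fun i _ => pow_nonneg hq0 i)
        (summable_geometric_of_lt_one hq0 hq1)
      rwa [tsum_geometric_of_lt_one hq0 hq1] at this
    have hkey : (1 - q)⁻¹ ≤ 2 / (1 - 2 / μ) := by
      have hq' : 1 - q = (1 - 1 / μ) / 2 := by rw [hqdef]; ring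
      rw [hq', ← one_div, div_div_eq_mul_div, one_mul, div_le_div_iff₀ (by linarith) h2μ]
      have h12 : 1 - 2 / μ ≤ 1 - 1 / μ := by
        have : 1 / μ ≤ 2 / μ := by
          gcongr
          exact one_le_two
        linarith
      nlinarith
    calc (∫ x in m..M J, ψ x) ≤ ψ m * d * ∑ j ∈ Finset.range J, q ^ j := hchain J
      _ ≤ ψ m * d * (1 - q)⁻¹ := by
          apply mul_le_mul_of_nonneg_left hgeom (mul_nonneg hψm.le hd.le)
      _ ≤ ψ m * d * (2 / (1 - 2 / μ)) := by
          apply mul_le_mul_of_nonneg_left hkey (mul_nonneg hψm.le hd.le)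
      _ = C := by rw [hCdef]; ring
  -- the sequence M is unbounded
  have hMtop : ∀ N : ℕ, ∃ J : ℕ, m + N ≤ M J := by
    intro N
    set L : ℝ := m + N with hLdef
    have hL1 : (1:ℝ) ≤ L := by
      rw [hLdef]; have : (0:ℝ) ≤ (N:ℝ) := Nat.cast_nonneg N; linarith
    have hLg : 0 < η L - L := sub_pos.mpr (hη L hL1).1
    set Mu : ℝ := L / (η L - L) with hMudef
    have hMu : μ ≤ Mu := by
      have hmL : m ≤ L := by rw [hLdef]; have : (0:ℝ) ≤ (N:ℝ) := Nat.cast_nonneg N; linarith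
      have := hμmono (Set.mem_Ici.mpr hm1) (Set.mem_Ici.mpr hL1) hmL
      simpa [hμdef, hddef, hMudef] using this
    have hMu0 : 0 < Mu := by linarith
    set c : ℝ := m / Mu with hcdef
    have hc0 : 0 < c := div_pos hm0 hMu0
    have key : ∀ j : ℕ, L ≤ M j ∨ m + j * c ≤ M j := by
      intro j
      induction j with
      | zero => right; simp [hM0]
      | succ j ih =>
        by_cases hLj : L ≤ M j
        · left; exact le_trans hLj (hMge j).2.le
        · push_neg at hLj
          rcases ih with h | h
          · exact absurd h (not_le.mpr hLj)
          · right
            have h1 := (hMge j).1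
            have hg0 : 0 < η (M j) - M j := sub_pos.mpr (hη _ h1).1
            have hμjL : M j / (η (M j) - M j) ≤ Mu := by
              have := hμmono (Set.mem_Ici.mpr h1) (Set.mem_Ici.mpr hL1) hLj.le
              simpa [hMudef] using this
            have hgapge : c ≤ η (M j) - M j := by
              rw [div_le_iff₀ hg0] at hμjL
              rw [hcdef, div_le_iff₀ hMu0]
              nlinarith [hMm j]
            rw [hMs]
            push_cast
            nlinarith
    obtain ⟨j, hj⟩ := exists_nat_ge ((N : ℝ) / c)
    rcases key j with h | h
    · exact ⟨j, h⟩
    · refine ⟨j, ?_⟩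
      have : (N : ℝ) ≤ j * c := by
        rw [div_le_iff₀ hc0] at hj
        linarith
      linarith
  -- integral up to m + N
  have hIN : ∀ N : ℕ, (∫ x in m..(m + N), ψ x) ≤ C := by
    intro N
    obtain ⟨J, hJ⟩ := hMtop N
    have hmN : m ≤ m + N := by
      have : (0:ℝ) ≤ (N:ℝ) := Nat.cast_nonneg N; linarith
    have hsplit : (∫ x in m..(m + N), ψ x) + (∫ x in (m + N)..M J, ψ x)
        = ∫ x in m..M J, ψ x :=
      intervalIntegral.integral_add_adjacent_intervals
        (hinteg m (m + N) hm1 hmN) (hinteg (m + N) (M J) (le_trans hm1 hmN) hJ)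
    have hnn2 : 0 ≤ ∫ x in (m + N)..M J, ψ x :=
      intervalIntegral.integral_nonneg hJ
        (fun x hx => hnn x (le_trans (le_trans hm1 hmN) hx.1))
    have := hC J
    linarith
  -- sum-integral comparison
  have hsumint : ∀ N : ℕ, (∑ i ∈ Finset.range N, ψ (m + (i + 1 : ℕ))) ≤
      ∫ x in m..(m + N), ψ x := by
    intro N
    apply AntitoneOn.sum_le_integral
    apply hanti.mono
    intro x hx
    exact le_trans hm1 hx.1
  have hpartial : ∀ N : ℕ, (∑ i ∈ Finset.range N, ψ (m + (i + 1 : ℕ))) ≤ C :=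
    fun N => le_trans (hsumint N) (hIN N)
  -- conclude
  have hC0 : 0 ≤ C := by
    rw [hCdef]
    apply mul_nonneg hψm.le
    positivity
  have hfinal : ∀ N : ℕ, (∑ k ∈ Finset.range N, ψ ((n : ℝ) + k + 1)) ≤ ψ m + C := by
    intro N
    cases N with
    | zero => simp; linarith
    | succ N =>
      rw [Finset.sum_range_succ']
      have h0 : ψ ((n : ℝ) + (0 : ℕ) + 1) = ψ m := by norm_num [hmdef]
      have hrw : (∑ i ∈ Finset.range N, ψ ((n : ℝ) + (i + 1 : ℕ) + 1)) =
          ∑ i ∈ Finset.range N, ψ (m + (i + 1 : ℕ)) := by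
        apply Finset.sum_congr rfl
        intro i _
        congr 1
        rw [hmdef]
        push_cast
        ring
      rw [h0, hrw]
      have := hpartial N
      linarith
  have hres : (∑' k : ℕ, ψ ((n : ℝ) + k + 1)) ≤ ψ m + C := by
    apply Real.tsum_le_of_sum_range_le
    · intro k
      apply hnn
      have : (0:ℝ) ≤ (k:ℝ) := Nat.cast_nonneg k
      have : (0:ℝ) ≤ (n:ℝ) := Nat.cast_nonneg n
      linarith [Nat.cast_nonneg (α := ℝ) k]
    · exact hfinal
  calc (∑' k : ℕ, ψ ((n : ℝ) + k + 1)) ≤ ψ m + C := hres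
    _ = ψ m * (1 + 2 * d / (1 - 2 / μ)) := by rw [hCdef]; ring
end
end
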